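/- arXiv:1104.0764 — 4 statements merged into one kernel-verified Lean document; each statement's English description precedes it below -/
import Mathlib

section
/- Let θ > 0, ρ ≤ 0, and let b(x) → 0 with |b| regularly varying at infinity with index ρ. Suppose k_n → ∞, log(k_n)/log(n) → 0, k_n^{1/2}·b(log(n/k_n)) → λ ∈ ℝ, and b is ultimately non-negative. Define β = 2·lim_{x→∞} x·b(x) ∈ [0,+∞] (assumed to exist). If β > θ, then for all n large enough AMSE(θ̂_n^{(3)}) < AMSE(θ̂_n^{(1)}) < AMSE(θ̂_n^{(2)}). -/
open MeasureTheory ProbabilityTheory Filter Real Topology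

noncomputable section

/-- `K_ρ(λ) = ∫_1^λ u^(ρ-1) du`. -/
def Krho (ρ lam : ℝ) : ℝ := ∫ u in (1:ℝ)..lam, u ^ (ρ - 1)

/-- `μ_ρ(t) = ∫_0^∞ K_ρ(1 + x/t) e^(-x) dx`. -/
def muRho (ρ t : ℝ) : ℝ := ∫ x in Set.Ioi (0:ℝ), Krho ρ (1 + x / t) * Real.exp (-x)

/-- `σ_ρ²(t) = ∫_0^∞ K_ρ²(1 + x/t) e^(-x) dx - μ_ρ²(t)`. -/
def sigmaRhoSq (ρ t : ℝ) : ℝ :=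
  (∫ x in Set.Ioi (0:ℝ), (Krho ρ (1 + x / t)) ^ 2 * Real.exp (-x)) - (muRho ρ t) ^ 2

/-- A function is slowly varying at infinity. -/
def SlowlyVarying (l : ℝ → ℝ) : Prop :=
  ∀ c > (0:ℝ), Tendsto (fun x => l (c * x) / l x) atTop (𝓝 1)

/-- A function is regularly varying at infinity with index `ρ`. -/
def RegularlyVarying (g : ℝ → ℝ) (ρ : ℝ) : Prop :=
  ∀ c > (0:ℝ), Tendsto (fun x => g (c * x) / g x) atTop (𝓝 (c ^ ρ))

/-- Convergence in distribution of a sequence of real random variables towards the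
law `μlim`, expressed through convergence of integrals of bounded continuous functions. -/
def TendstoInDistribution {Ω : Type*} [MeasurableSpace Ω] (P : Measure Ω)
    (Z : ℕ → Ω → ℝ) (μlim : Measure ℝ) : Prop :=
  ∀ f : BoundedContinuousFunction ℝ ℝ,
    Tendsto (fun n => ∫ ω, f (Z n ω) ∂P) atTop (𝓝 (∫ x, f x ∂μlim))

/-- Convergence to `0` in probability (`o_P(1)`). -/
def TendstoInProbabilityZero {Ω : Type*} [MeasurableSpace Ω] (P : Measure Ω)
    (Z : ℕ → Ω → ℝ) : Prop :=
  ∀ δ > (0:ℝ), Tendsto (fun n => P {ω | δ ≤ |Z n ω|}) atTop (𝓝 0)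

noncomputable section
private lemma quad_le_log (u : ℝ) (hu : 0 ≤ u) : u - u ^ 2 / 2 ≤ Real.log (1 + u) := by
  have hle : (1:ℝ) ≤ 1 + u := by linarith
  have h0 : (0:ℝ) ∉ Set.uIcc 1 (1+u) := by
    rw [Set.uIcc_of_le hle]
    rintro ⟨h1, -⟩; linarith
  have hlog : Real.log (1 + u) = ∫ x in (1:ℝ)..(1+u), 1 / x := by
    rw [integral_one_div h0, div_one]
  have hcont : ContinuousOn (fun x : ℝ => 1 / x) (Set.uIcc 1 (1+u)) := by
    apply continuousOn_const.div continuousOn_id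
    intro x hx
    rw [Set.uIcc_of_le hle] at hx
    have h1 : (1:ℝ) ≤ x := hx.1
    simp only [id]
    intro h; rw [h] at h1; linarith
  have hmono : ∫ x in (1:ℝ)..(1+u), (2 - x) ≤ ∫ x in (1:ℝ)..(1+u), 1 / x := by
    apply intervalIntegral.integral_mono_on hle
      (intervalIntegrable_const.sub intervalIntegral.intervalIntegrable_id)
      hcont.intervalIntegrable
    intro x hx
    have hx1 : 1 ≤ x := hx.1
    rw [le_div_iff₀ (by linarith)]
    nlinarith [sq_nonneg (x - 1)]
  have hval : ∫ x in (1:ℝ)..(1+u), (2 - x) = u - u ^ 2 / 2 := by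
    rw [intervalIntegral.integral_sub intervalIntegrable_const
      intervalIntegral.intervalIntegrable_id, intervalIntegral.integral_const, integral_id]
    simp only [smul_eq_mul]
    ring
  rw [hlog]; rw [hval] at hmono; linarith

private lemma Krho_zero (l : ℝ) (hl : 1 ≤ l) : Krho 0 l = Real.log l := by
  unfold Krho
  have h1 : Set.EqOn (fun u : ℝ => u ^ ((0:ℝ) - 1)) (fun u => 1 / u) (Set.uIcc 1 l) := by
    intro u hu
    rw [Set.uIcc_of_le hl] at hu
    have hu0 : (0:ℝ) < u := lt_of_lt_of_le one_pos hu.1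
    simp only
    rw [zero_sub, Real.rpow_neg hu0.le, Real.rpow_one, one_div]
  rw [intervalIntegral.integral_congr h1, integral_one_div, div_one]
  rw [Set.uIcc_of_le hl]
  rintro ⟨h, -⟩; linarith

private lemma integrableOn_id_mul_exp :
    IntegrableOn (fun x : ℝ => x * Real.exp (-x)) (Set.Ioi 0) := by
  have h := Real.GammaIntegral_convergent (s := 2) (by norm_num)
  apply h.congr_fun ?_ measurableSet_Ioi
  intro x hx
  simp only
  rw [show (2:ℝ) - 1 = 1 by norm_num, Real.rpow_one, mul_comm]

private lemma integrableOn_sq_mul_exp :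
    IntegrableOn (fun x : ℝ => x ^ 2 * Real.exp (-x)) (Set.Ioi 0) := by
  have h := Real.GammaIntegral_convergent (s := 3) (by norm_num)
  apply h.congr_fun ?_ measurableSet_Ioi
  intro x hx
  simp only
  rw [show (3:ℝ) - 1 = ((2:ℕ):ℝ) by norm_num, Real.rpow_natCast, mul_comm]

private lemma integral_id_mul_exp : ∫ x in Set.Ioi (0:ℝ), x * Real.exp (-x) = 1 := by
  calc ∫ x in Set.Ioi (0:ℝ), x * Real.exp (-x)
      = ∫ x in Set.Ioi (0:ℝ), Real.exp (-x) * x ^ ((2:ℝ) - 1) := by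
        apply setIntegral_congr_fun measurableSet_Ioi
        intro x hx; simp only
        rw [show (2:ℝ) - 1 = 1 by norm_num, Real.rpow_one, mul_comm]
    _ = Real.Gamma 2 := (Real.Gamma_eq_integral (by norm_num)).symm
    _ = 1 := by
        rw [show (2:ℝ) = (1:ℕ) + 1 by norm_num, Real.Gamma_nat_eq_factorial]; norm_num

private lemma integral_sq_mul_exp : ∫ x in Set.Ioi (0:ℝ), x ^ 2 * Real.exp (-x) = 2 := by
  calc ∫ x in Set.Ioi (0:ℝ), x ^ 2 * Real.exp (-x)
      = ∫ x in Set.Ioi (0:ℝ), Real.exp (-x) * x ^ ((3:ℝ) - 1) := by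
        apply setIntegral_congr_fun measurableSet_Ioi
        intro x hx; simp only
        rw [show (3:ℝ) - 1 = ((2:ℕ):ℝ) by norm_num, Real.rpow_natCast, mul_comm]
    _ = Real.Gamma 3 := (Real.Gamma_eq_integral (by norm_num)).symm
    _ = 2 := by
        rw [show (3:ℝ) = (2:ℕ) + 1 by norm_num, Real.Gamma_nat_eq_factorial]; norm_num

end

noncomputable section
private lemma muRho_zero_eq (t : ℝ) (ht : 0 < t) :
    muRho 0 t = ∫ x in Set.Ioi (0:ℝ), Real.log (1 + x / t) * Real.exp (-x) := by
  unfold muRho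
  apply setIntegral_congr_fun measurableSet_Ioi
  intro x hx
  simp only
  have hxt : 0 ≤ x / t := div_nonneg (le_of_lt hx) ht.le
  rw [Krho_zero _ (by linarith)]

private lemma integrableOn_log_mul_exp (t : ℝ) (ht : 0 < t) :
    IntegrableOn (fun x : ℝ => Real.log (1 + x / t) * Real.exp (-x)) (Set.Ioi 0) := by
  have hbound : IntegrableOn (fun x : ℝ => (1 / t) * (x * Real.exp (-x))) (Set.Ioi 0) :=
    integrableOn_id_mul_exp.const_mul _
  apply Integrable.mono' hbound
  · exact ((Real.measurable_log.comp (measurable_const.add (measurable_id.div_const t))).mul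
      (Real.measurable_exp.comp measurable_id.neg)).aestronglyMeasurable
  · filter_upwards [ae_restrict_mem measurableSet_Ioi] with x hx
    have hx0 : 0 < x := hx
    have h1 : 0 ≤ x / t := by positivity
    have h2 : 0 ≤ Real.log (1 + x / t) := Real.log_nonneg (by linarith)
    have h3 : Real.log (1 + x / t) ≤ x / t := by
      have := Real.log_le_sub_one_of_pos (show 0 < 1 + x / t by linarith)
      linarith
    rw [Real.norm_eq_abs, abs_of_nonneg (by positivity)]
    have h4 : Real.log (1 + x / t) * Real.exp (-x) ≤ (x / t) * Real.exp (-x) :=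
      mul_le_mul_of_nonneg_right h3 (Real.exp_pos _).le
    have heq : (1 / t) * (x * Real.exp (-x)) = (x / t) * Real.exp (-x) := by ring
    linarith

private lemma integrableOn_div_mul_exp (t : ℝ) :
    IntegrableOn (fun x : ℝ => (x / t) * Real.exp (-x)) (Set.Ioi 0) := by
  have : (fun x : ℝ => (x / t) * Real.exp (-x))
      = fun x : ℝ => (1 / t) * (x * Real.exp (-x)) := by funext x; ring
  rw [this]
  exact integrableOn_id_mul_exp.const_mul _

private lemma integral_div_mul_exp (t : ℝ) :
    ∫ x in Set.Ioi (0:ℝ), (x / t) * Real.exp (-x) = 1 / t := by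
  have : (fun x : ℝ => (x / t) * Real.exp (-x))
      = fun x : ℝ => (1 / t) * (x * Real.exp (-x)) := by funext x; ring
  rw [this, integral_const_mul, integral_id_mul_exp, mul_one]

private lemma muRho_lt (t : ℝ) (ht : 0 < t) : muRho 0 t < 1 / t := by
  rw [muRho_zero_eq t ht]
  have hint1 := integrableOn_log_mul_exp t ht
  have hint2 := integrableOn_div_mul_exp t
  have hsub : IntegrableOn (fun x : ℝ =>
      (x / t) * Real.exp (-x) - Real.log (1 + x / t) * Real.exp (-x)) (Set.Ioi 0) :=
    hint2.sub hint1
  have hpos : 0 < ∫ x in Set.Ioi (0:ℝ),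
      ((x / t) * Real.exp (-x) - Real.log (1 + x / t) * Real.exp (-x)) := by
    have hnn : ∀ x ∈ Set.Ioi (0:ℝ),
        0 < (x / t) * Real.exp (-x) - Real.log (1 + x / t) * Real.exp (-x) := by
      intro x hx
      have hx0 : 0 < x := hx
      have hxt : 0 < x / t := by positivity
      have h3 : Real.log (1 + x / t) < x / t := by
        have := Real.log_lt_sub_one_of_pos (show 0 < 1 + x / t by linarith)
          (by intro h; nlinarith)
        linarith
      have := Real.exp_pos (-x)
      nlinarith
    rw [setIntegral_pos_iff_support_of_nonneg_ae ?_ hsub]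
    · have hsubset : Set.Ioi (0:ℝ) ⊆ Function.support (fun x : ℝ =>
          (x / t) * Real.exp (-x) - Real.log (1 + x / t) * Real.exp (-x)) ∩ Set.Ioi 0 :=
        fun x hx => ⟨ne_of_gt (hnn x hx), hx⟩
      refine lt_of_lt_of_le ?_ (measure_mono hsubset)
      simp [Real.volume_Ioi]
    · exact (ae_restrict_mem measurableSet_Ioi).mono fun x hx => (hnn x hx).le
  rw [integral_sub hint2 hint1, integral_div_mul_exp] at hpos
  linarith

private lemma muRho_ge (t : ℝ) (ht : 0 < t) : 1 / t - 1 / t ^ 2 ≤ muRho 0 t := by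
  rw [muRho_zero_eq t ht]
  have hint1 := integrableOn_log_mul_exp t ht
  have hint3 : IntegrableOn (fun x : ℝ => (x / t - x ^ 2 / (2 * t ^ 2)) * Real.exp (-x))
      (Set.Ioi 0) := by
    have : (fun x : ℝ => (x / t - x ^ 2 / (2 * t ^ 2)) * Real.exp (-x))
        = fun x : ℝ => (1 / t) * (x * Real.exp (-x))
          - (1 / (2 * t ^ 2)) * (x ^ 2 * Real.exp (-x)) := by funext x; ring
    rw [this]
    exact (integrableOn_id_mul_exp.const_mul _).sub (integrableOn_sq_mul_exp.const_mul _)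
  have hmono := setIntegral_mono_on hint3 hint1 measurableSet_Ioi ?_
  · have : (fun x : ℝ => (x / t - x ^ 2 / (2 * t ^ 2)) * Real.exp (-x))
        = fun x : ℝ => (1 / t) * (x * Real.exp (-x))
          - (1 / (2 * t ^ 2)) * (x ^ 2 * Real.exp (-x)) := by funext x; ring
    rw [this, integral_sub ((integrableOn_id_mul_exp).const_mul _)
      ((integrableOn_sq_mul_exp).const_mul _), integral_const_mul, integral_const_mul,
      integral_id_mul_exp, integral_sq_mul_exp] at hmono
    have ht2 : (1 / (2 * t ^ 2)) * 2 = 1 / t ^ 2 := by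
      field_simp
    nlinarith [hmono]
  · intro x hx
    have hx0 : 0 < x := hx
    have hxt : 0 ≤ x / t := by positivity
    have h := quad_le_log (x / t) hxt
    have hsq : (x / t) ^ 2 / 2 = x ^ 2 / (2 * t ^ 2) := by
      rw [div_pow]; ring
    have := Real.exp_pos (-x)
    nlinarith

private lemma muRho_pos (t : ℝ) (ht : 1 < t) : 0 < muRho 0 t := by
  have h := muRho_ge t (by linarith)
  have h1 : 1 / t ^ 2 < 1 / t := by
    apply div_lt_div_of_pos_left one_pos (by positivity)
    nlinarith
  linarith
end

noncomputable section
private lemma hsimp_cov (t : ℝ) (x : ℝ) :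
    |(-Real.exp (-x))| • Real.log (1 - Real.log (Real.exp (-x)) / t)
      = Real.log (1 + x / t) * Real.exp (-x) := by
  rw [abs_neg, abs_of_pos (Real.exp_pos _), Real.log_exp, smul_eq_mul, mul_comm,
    neg_div, sub_neg_eq_add]

private lemma cov (t : ℝ) (ht : 0 < t) :
    IntegrableOn (fun y : ℝ => Real.log (1 - Real.log y / t)) (Set.Ioc 0 1) ∧
    ∫ y in Set.Ioc (0:ℝ) 1, Real.log (1 - Real.log y / t) = muRho 0 t := by
  have hderiv : ∀ x ∈ Set.Ioi (0:ℝ), HasDerivWithinAt (fun x : ℝ => Real.exp (-x))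
      (-Real.exp (-x)) (Set.Ioi 0) x := by
    intro x _
    have h : HasDerivAt (fun x : ℝ => Real.exp (-x)) (Real.exp (-x) * (-1)) x :=
      (Real.hasDerivAt_exp (-x)).comp x ((hasDerivAt_id x).neg)
    simpa [mul_comm] using h.hasDerivWithinAt
  have hinj : Set.InjOn (fun x : ℝ => Real.exp (-x)) (Set.Ioi 0) := by
    intro a _ c _ h
    have := Real.exp_injective h
    linarith [neg_inj.mp this]
  have himg : (fun x : ℝ => Real.exp (-x)) '' Set.Ioi 0 = Set.Ioo 0 1 := by
    ext y
    constructor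
    · rintro ⟨x, hx, rfl⟩
      exact ⟨Real.exp_pos _, Real.exp_lt_one_iff.mpr (by simpa using hx)⟩
    · rintro ⟨hy0, hy1⟩
      refine ⟨-Real.log y, ?_, by simp [Real.exp_log hy0]⟩
      simpa using Real.log_neg hy0 hy1
  have key := integral_image_eq_integral_abs_deriv_smul measurableSet_Ioi hderiv hinj
      (fun y => Real.log (1 - Real.log y / t))
  rw [himg] at key
  have keyInt := integrableOn_image_iff_integrableOn_abs_deriv_smul measurableSet_Ioi hderiv hinj
      (fun y => Real.log (1 - Real.log y / t))
  rw [himg] at keyInt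
  have hIoo : IntegrableOn (fun y : ℝ => Real.log (1 - Real.log y / t)) (Set.Ioo 0 1) := by
    rw [keyInt]
    exact (integrableOn_log_mul_exp t ht).congr_fun
      (fun x _ => (hsimp_cov t x).symm) measurableSet_Ioi
  constructor
  · exact hIoo.congr_set_ae (MeasureTheory.Ioo_ae_eq_Ioc (μ := volume) (a := (0:ℝ)) (b := 1)).symm
  · rw [integral_Ioc_eq_integral_Ioo, key, muRho_zero_eq t ht]
    apply setIntegral_congr_fun measurableSet_Ioi
    intro x _
    exact hsimp_cov t x
end

noncomputable section
private lemma f_anti (t y y' : ℝ) (ht : 0 < t) (hy : 0 < y) (hyy : y ≤ y') (hy1 : y' ≤ 1) :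
    Real.log (1 - Real.log y' / t) ≤ Real.log (1 - Real.log y / t) := by
  have h1 : Real.log y ≤ Real.log y' := Real.log_le_log hy hyy
  have h2 : Real.log y' ≤ 0 := Real.log_nonpos (by linarith) hy1
  have h3 : (0:ℝ) < 1 - Real.log y' / t := by
    have ht' : (0:ℝ) ≤ t := ht.le
    have : Real.log y' / t ≤ 0 := by rw [div_nonpos_iff]; tauto
    linarith
  apply Real.log_le_log h3
  have : Real.log y / t ≤ Real.log y' / t := (div_le_div_iff_of_pos_right ht).mpr h1
  linarith

private lemma f_pos (t y : ℝ) (ht : 0 < t) (hy0 : 0 < y) (hy1 : y < 1) :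
    0 < Real.log (1 - Real.log y / t) := by
  have h1 : Real.log y < 0 := Real.log_neg hy0 hy1
  apply Real.log_pos
  have h2 : Real.log y / t < 0 := div_neg_of_neg_of_pos h1 ht
  linarith

private lemma f_nonneg (t y : ℝ) (ht : 0 < t) (hy0 : 0 < y) (hy1 : y ≤ 1) :
    0 ≤ Real.log (1 - Real.log y / t) := by
  have h1 : Real.log y ≤ 0 := Real.log_nonpos hy0.le hy1
  apply Real.log_nonneg
  have ht' : (0:ℝ) ≤ t := ht.le
  have : Real.log y / t ≤ 0 := by rw [div_nonpos_iff]; tauto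
  linarith
end

noncomputable section
private lemma T2_bounds (t : ℝ) (ht : 0 < t) (K : ℕ) (hK : 2 ≤ K) :
    0 < (1 / (K : ℝ)) * ∑ i ∈ Finset.Icc 1 K,
        Real.log (1 - Real.log ((i : ℝ) / (K : ℝ)) / t) ∧
    (1 / (K : ℝ)) * ∑ i ∈ Finset.Icc 1 K,
        Real.log (1 - Real.log ((i : ℝ) / (K : ℝ)) / t) < muRho 0 t := by
  have hK0 : (0:ℝ) < K := by
    have : (0:ℕ) < K := by omega
    exact_mod_cast this
  constructor
  · apply mul_pos (by positivity)
    apply Finset.sum_pos'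
    · intro i hi
      rw [Finset.mem_Icc] at hi
      have hi1 : (1:ℝ) ≤ (i:ℝ) := by exact_mod_cast hi.1
      have hiK : (i:ℝ) ≤ (K:ℝ) := by exact_mod_cast hi.2
      exact f_nonneg t _ ht (by positivity) ((div_le_one hK0).mpr hiK)
    · refine ⟨1, Finset.mem_Icc.mpr ⟨le_refl 1, by omega⟩, ?_⟩
      apply f_pos t _ ht (by positivity)
      rw [div_lt_one hK0]
      exact_mod_cast (by omega : 1 < K)
  · obtain ⟨hint, hval⟩ := cov t ht
    set a : ℕ → ℝ := fun i => (i : ℝ) / K with ha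
    have hle : ∀ i : ℕ, a i ≤ a (i+1) := by
      intro i
      apply (div_le_div_iff_of_pos_right hK0).mpr
      push_cast; linarith
    have hsub : ∀ i : ℕ, i < K → Set.Ioc (a i) (a (i+1)) ⊆ Set.Ioc 0 1 := by
      intro i hiK x hx
      have h0 : 0 ≤ a i := by positivity
      have h1 : a (i+1) ≤ 1 := by
        rw [ha]
        rw [div_le_one hK0]
        exact_mod_cast Nat.succ_le_of_lt hiK
      exact ⟨lt_of_le_of_lt h0 hx.1, le_trans hx.2 h1⟩
    have hii : ∀ i : ℕ, i < K → IntervalIntegrable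
        (fun y : ℝ => Real.log (1 - Real.log y / t)) volume (a i) (a (i+1)) := by
      intro i hiK
      rw [intervalIntegrable_iff_integrableOn_Ioc_of_le (hle i)]
      exact hint.mono_set (hsub i hiK)
    have hsum : ∑ i ∈ Finset.range K,
        (∫ x in a i..a (i+1), Real.log (1 - Real.log x / t)) = muRho 0 t := by
      rw [intervalIntegral.sum_integral_adjacent_intervals hii]
      have ha0 : a 0 = 0 := by simp [ha]
      have haK : a K = 1 := by rw [ha]; exact div_self (ne_of_gt hK0)
      rw [ha0, haK, intervalIntegral.integral_of_le zero_le_one, hval]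
    have hterm : ∀ i ∈ Finset.range K,
        (1 / (K:ℝ)) * Real.log (1 - Real.log (a (i+1)) / t)
          ≤ ∫ x in a i..a (i+1), Real.log (1 - Real.log x / t) := by
      intro i hi
      rw [Finset.mem_range] at hi
      rw [intervalIntegral.integral_of_le (hle i)]
      have h1 : a (i+1) ≤ 1 := by
        rw [ha, div_le_one hK0]
        exact_mod_cast Nat.succ_le_of_lt hi
      have hptw : ∀ x ∈ Set.Ioc (a i) (a (i+1)),
          Real.log (1 - Real.log (a (i+1)) / t) ≤ Real.log (1 - Real.log x / t) := by
        intro x hx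
        have hx0 : 0 < x := lt_of_le_of_lt (by positivity : (0:ℝ) ≤ a i) hx.1
        exact f_anti t x (a (i+1)) ht hx0 hx.2 h1
      have hmeas : volume (Set.Ioc (a i) (a (i+1))) = ENNReal.ofReal (1 / (K:ℝ)) := by
        rw [Real.volume_Ioc]
        congr 1
        rw [ha]
        push_cast
        rw [div_sub_div_same]
        ring_nf
      have hkey := setIntegral_ge_of_const_le measurableSet_Ioc
        (by rw [hmeas]; exact ENNReal.ofReal_ne_top) hptw (hint.mono_set (hsub i hi))
      rw [measureReal_def, hmeas, ENNReal.toReal_ofReal (by positivity), smul_eq_mul] at hkey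
      linarith [hkey]
    have hstrict : ∃ i ∈ Finset.range K,
        (1 / (K:ℝ)) * Real.log (1 - Real.log (a (i+1)) / t)
          < ∫ x in a i..a (i+1), Real.log (1 - Real.log x / t) := by
      refine ⟨K - 1, Finset.mem_range.mpr (by omega), ?_⟩
      have hKK : K - 1 + 1 = K := by omega
      have haK : a K = 1 := by rw [ha]; exact div_self (ne_of_gt hK0)
      have hiiK := hii (K-1) (by omega)
      rw [hKK]
      rw [hKK] at hiiK
      have hfa : Real.log (1 - Real.log (a K) / t) = 0 := by
        rw [haK]; simp
      rw [hfa, mul_zero]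
      apply intervalIntegral.intervalIntegral_pos_of_pos_on hiiK
      · intro x hx
        apply f_pos t x ht
        · exact lt_of_le_of_lt (by positivity : (0:ℝ) ≤ a (K-1)) hx.1
        · rw [haK] at hx; exact hx.2
      · rw [haK, ha, div_lt_one hK0]
        exact_mod_cast (by omega : K - 1 < K)
    have hrw : (1 / (K : ℝ)) * ∑ i ∈ Finset.Icc 1 K,
          Real.log (1 - Real.log ((i : ℝ) / (K : ℝ)) / t)
        = ∑ i ∈ Finset.range K,
          (1 / (K:ℝ)) * Real.log (1 - Real.log (a (i+1)) / t) := by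
      rw [Finset.mul_sum, ← Finset.Ico_add_one_right_eq_Icc, Finset.sum_Ico_eq_sum_range]
      apply Finset.sum_congr (by norm_num)
      intro i _
      have : ((1 + i : ℕ) : ℝ) / (K:ℝ) = a (i+1) := by
        rw [ha]; push_cast; ring
      rw [this]
    rw [hrw, ← hsum]
    exact Finset.sum_lt_sum hterm hstrict
end

end

theorem amse_comparison_positive_bias_large_beta
    (θ ρ : ℝ) (hθpos : 0 < θ) (hρ : ρ ≤ 0)
    (b : ℝ → ℝ) (hb0 : Tendsto b atTop (𝓝 0))
    (hRV : RegularlyVarying (fun x => |b x|) ρ)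
    (k : ℕ → ℕ) (hkbd : ∀ n, 2 ≤ n → 1 ≤ k n ∧ k n < n)
    (hk : Tendsto (fun n => (k n : ℝ)) atTop atTop)
    (hC2 : Tendsto (fun n : ℕ => Real.log (k n) / Real.log n) atTop (𝓝 0))
    (lam : ℝ)
    (hlam : Tendsto (fun n => Real.sqrt (k n) * b (Real.log ((n : ℝ) / (k n : ℝ))))
      atTop (𝓝 lam))
    -- the three normalizing sequences and the associated bias terms
    (T1 T2 T3 a1 a2 a3 : ℕ → ℝ)
    (hT1 : ∀ n, T1 n = muRho 0 (Real.log ((n : ℝ) / (k n : ℝ))))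
    (hT2 : ∀ n, T2 n = (1 / (k n : ℝ)) * ∑ i ∈ Finset.Icc 1 (k n),
      Real.log (1 - Real.log ((i : ℝ) / (k n : ℝ)) / Real.log ((n : ℝ) / (k n : ℝ))))
    (hT3 : ∀ n, T3 n = 1 / Real.log ((n : ℝ) / (k n : ℝ)))
    (ha1 : ∀ n, a1 n = muRho 0 (Real.log ((n : ℝ) / (k n : ℝ))) / T1 n - 1)
    (ha2 : ∀ n, a2 n = muRho 0 (Real.log ((n : ℝ) / (k n : ℝ))) / T2 n - 1)
    (ha3 : ∀ n, a3 n = muRho 0 (Real.log ((n : ℝ) / (k n : ℝ))) / T3 n - 1)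
    -- the asymptotic mean square errors of the three estimators
    (AMSE1 AMSE2 AMSE3 : ℕ → ℝ)
    (hAMSE1 : ∀ n, AMSE1 n =
      (θ * a1 n + b (Real.log ((n : ℝ) / (k n : ℝ)))) ^ 2 + θ ^ 2 / (k n : ℝ))
    (hAMSE2 : ∀ n, AMSE2 n =
      (θ * a2 n + b (Real.log ((n : ℝ) / (k n : ℝ)))) ^ 2 + θ ^ 2 / (k n : ℝ))
    (hAMSE3 : ∀ n, AMSE3 n =
      (θ * a3 n + b (Real.log ((n : ℝ) / (k n : ℝ)))) ^ 2 + θ ^ 2 / (k n : ℝ))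
    (hbpos : ∀ᶠ x in atTop, 0 ≤ b x)
    (β : EReal) (hβ0 : 0 ≤ β)
    (hβ : Tendsto (fun x : ℝ => ((2 * x * b x : ℝ) : EReal)) atTop (𝓝 β))
    (hβθ : (θ : EReal) < β) :
    ∀ᶠ n in atTop, AMSE3 n < AMSE1 n ∧ AMSE1 n < AMSE2 n := by
  have htlim : Tendsto (fun n : ℕ => Real.log ((n : ℝ) / (k n : ℝ))) atTop atTop := by
    have hbase : Tendsto (fun n : ℕ => Real.log n * (1 - Real.log (k n) / Real.log n))
        atTop atTop := by
      have h1 : Tendsto (fun n : ℕ => (1:ℝ) - Real.log (k n) / Real.log n) atTop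
          (𝓝 (1 - 0)) := tendsto_const_nhds.sub hC2
      exact (Real.tendsto_log_atTop.comp tendsto_natCast_atTop_atTop).atTop_mul_pos
        (by norm_num) h1
    apply hbase.congr'
    filter_upwards [eventually_ge_atTop 2] with n hn
    have hk1 : 1 ≤ k n := (hkbd n hn).1
    have hn2 : (2:ℝ) ≤ (n:ℝ) := by exact_mod_cast hn
    have hlogn : 0 < Real.log n := Real.log_pos (by linarith)
    have hkpos : (0:ℝ) < (k n : ℝ) := by exact_mod_cast hk1
    rw [Real.log_div (by positivity) (ne_of_gt hkpos)]
    field_simp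
  have hE2 : ∀ᶠ n in atTop, 2 ≤ k n := by
    filter_upwards [hk.eventually_ge_atTop 2] with n hn
    exact_mod_cast hn
  have hE3 : ∀ᶠ n : ℕ in atTop, 1 < Real.log ((n : ℝ) / (k n : ℝ)) :=
    htlim.eventually_gt_atTop 1
  have hE4 : ∀ᶠ n : ℕ in atTop, 0 ≤ b (Real.log ((n : ℝ) / (k n : ℝ))) :=
    htlim.eventually hbpos
  have hE5x : ∀ᶠ x : ℝ in atTop, θ < 2 * x * b x := by
    filter_upwards [hβ.eventually (lt_mem_nhds hβθ)] with x hx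
    exact_mod_cast hx
  have hE5 : ∀ᶠ n : ℕ in atTop, θ < 2 * Real.log ((n : ℝ) / (k n : ℝ))
      * b (Real.log ((n : ℝ) / (k n : ℝ))) := htlim.eventually hE5x
  filter_upwards [hE2, hE3, hE4, hE5] with n h2 h3 h4 h5
  set tt := Real.log ((n : ℝ) / (k n : ℝ)) with htt
  have ht0 : (0:ℝ) < tt := by linarith
  have hmlt : muRho 0 tt < 1 / tt := muRho_lt tt ht0
  have hmge : 1 / tt - 1 / tt ^ 2 ≤ muRho 0 tt := muRho_ge tt ht0
  have hmpos : 0 < muRho 0 tt := muRho_pos tt h3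
  obtain ⟨hT2p, hT2l⟩ := T2_bounds tt ht0 (k n) h2
  set m := muRho 0 tt with hm
  have ha1' : a1 n = 0 := by
    rw [ha1 n, hT1 n, ← htt, ← hm, div_self (ne_of_gt hmpos), sub_self]
  have ha3' : a3 n = m * tt - 1 := by
    rw [ha3 n, hT3 n, ← htt, ← hm, div_div_eq_mul_div, div_one]
  have ha2' : 0 < a2 n := by
    rw [ha2 n, ← htt, ← hm]
    have h1 : 0 < T2 n := by rw [hT2 n, ← htt]; exact hT2p
    have h2' : T2 n < m := by rw [hT2 n, ← htt]; exact hT2l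
    have := (one_lt_div h1).mpr h2'
    linarith
  have htne : tt ≠ 0 := ne_of_gt ht0
  constructor
  · rw [hAMSE3 n, hAMSE1 n, ← htt, ha1', ha3']
    apply add_lt_add_left
    have hd1 : 0 < 1 - m * tt := by
      have h := mul_lt_mul_of_pos_right hmlt ht0
      rw [one_div, inv_mul_cancel₀ htne] at h
      linarith
    have h6 : (1 / tt - 1 / tt ^ 2) * tt ^ 2 ≤ m * tt ^ 2 :=
      mul_le_mul_of_nonneg_right hmge (by positivity)
    have h7 : (1 / tt - 1 / tt ^ 2) * tt ^ 2 = tt - 1 := by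
      field_simp
    have hd2 : (1 - m * tt) * tt ≤ 1 := by nlinarith
    have h8 : θ * ((1 - m * tt) * tt) ≤ θ * 1 := mul_le_mul_of_nonneg_left hd2 hθpos.le
    have h9 : θ * (1 - m * tt) * tt < 2 * b tt * tt := by nlinarith
    have h10 : θ * (1 - m * tt) < 2 * b tt := lt_of_mul_lt_mul_right h9 ht0.le
    have hxpos : 0 < θ * (1 - m * tt) := mul_pos hθpos hd1
    nlinarith [mul_lt_mul_of_pos_left h10 hxpos]
  · rw [hAMSE2 n, hAMSE1 n, ← htt, ha1']
    apply add_lt_add_left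
    have hp : 0 < θ * a2 n := mul_pos hθpos ha2'
    nlinarith [mul_pos hp hp, mul_nonneg hp.le h4]
end

section
/- Let θ > 0, ρ ≤ 0, and let b(x) → 0 with |b| regularly varying at infinity with index ρ. Suppose k_n → ∞, log(k_n)/log(n) → 0, k_n^{1/2}·b(log(n/k_n)) → λ ∈ ℝ, and b is ultimately non-negative. Define β = 2·lim_{x→∞} x·b(x) ∈ [0,+∞] (assumed to exist). If β < θ, then for all n large enough AMSE(θ̂_n^{(1)}) < min(AMSE(θ̂_n^{(2)}), AMSE(θ̂_n^{(3)})). -/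
open MeasureTheory ProbabilityTheory Filter Real Topology

noncomputable section

namespace AMSEAux

open Set intervalIntegral

lemma log_cubic (u : ℝ) (hu : 0 ≤ u) : Real.log (1 + u) ≤ u - u^2/2 + u^3/3 := by
  set f : ℝ → ℝ := fun u => u - u^2/2 + u^3/3 - Real.log (1+u) with hf
  have hd : ∀ x : ℝ, 0 < 1 + x → HasDerivAt f (1 - x + x^2 - 1/(1+x)) x := by
    intro x hx
    have h1 : HasDerivAt (fun u : ℝ => Real.log (1+u)) (1/(1+x)) x := by
      have := (HasDerivAt.const_add 1 (hasDerivAt_id x)).log (by simp only [id]; linarith)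
      simpa using this
    have h2 : HasDerivAt (fun u : ℝ => u - u^2/2 + u^3/3) (1 - x + x^2) x := by
      have i := hasDerivAt_id x
      have p2 := (hasDerivAt_pow 2 x)
      have p3 := (hasDerivAt_pow 3 x)
      have := (i.sub (p2.div_const 2)).add (p3.div_const 3)
      convert this using 1
      · rfl
      · rfl
      · rfl
      · push_cast; ring
    exact h2.sub h1
  have hmono : MonotoneOn f (Set.Ici 0) := by
    apply monotoneOn_of_deriv_nonneg (convex_Ici 0)
    · intro x hx
      exact ((hd x (by simp at hx; linarith)).continuousAt).continuousWithinAt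
    · intro x hx
      rw [interior_Ici] at hx
      exact ((hd x (by simp at hx; linarith)).differentiableAt).differentiableWithinAt
    · intro x hx
      rw [interior_Ici] at hx
      simp only [Set.mem_Ioi] at hx
      rw [(hd x (by linarith)).deriv]
      have : 1 - x + x^2 - 1/(1+x) = x^3/(1+x) := by
        field_simp
        ring
      rw [this]
      positivity
  have h0 : f 0 = 0 := by simp [hf]
  have := hmono (Set.mem_Ici.2 le_rfl) (Set.mem_Ici.2 hu) hu
  rw [h0] at this
  simp only [hf] at this
  linarith

lemma integ_pow_exp (n : ℕ) : IntegrableOn (fun x : ℝ => x ^ n * Real.exp (-x)) (Set.Ioi 0) := by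
  have h := Real.GammaIntegral_convergent (s := (n:ℝ)+1) (by positivity)
  apply h.congr_fun ?_ measurableSet_Ioi
  intro x hx
  have h1 : ((n:ℝ)+1-1) = (n:ℝ) := by ring
  simp only [h1, Real.rpow_natCast]
  ring

lemma int_pow_exp (n : ℕ) : ∫ x in Set.Ioi (0:ℝ), x ^ n * Real.exp (-x) = n.factorial := by
  have h := Real.Gamma_eq_integral (s := (n:ℝ)+1) (by positivity)
  rw [Real.Gamma_nat_eq_factorial] at h
  rw [h]
  apply setIntegral_congr_fun measurableSet_Ioi
  intro x hx
  have h1 : ((n:ℝ)+1-1) = (n:ℝ) := by ring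
  simp only [h1, Real.rpow_natCast]
  ring

lemma Krho_zero (l : ℝ) (hl : 0 < l) : Krho 0 l = Real.log l := by
  unfold Krho
  simp only [zero_sub, Real.rpow_neg_one]
  rw [integral_inv (Set.notMem_uIcc_of_lt one_pos hl), div_one]

lemma muRho_zero_eq (t : ℝ) (ht : 0 < t) :
    muRho 0 t = ∫ x in Set.Ioi (0:ℝ), Real.log (1 + x / t) * Real.exp (-x) := by
  unfold muRho
  apply setIntegral_congr_fun measurableSet_Ioi
  intro x hx
  simp only [Set.mem_Ioi] at hx
  simp only []
  rw [Krho_zero _ (by positivity)]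

lemma integrable_log_exp (t : ℝ) (ht : 0 < t) :
    IntegrableOn (fun x : ℝ => Real.log (1 + x / t) * Real.exp (-x)) (Set.Ioi 0) := by
  have hpow : IntegrableOn (fun x : ℝ => x ^ 1 * Real.exp (-x)) (Set.Ioi 0) := integ_pow_exp 1
  have hdom : IntegrableOn (fun x : ℝ => (1/t) * (x ^ 1 * Real.exp (-x))) (Set.Ioi 0) :=
    hpow.const_mul _
  apply Integrable.mono' hdom
  · apply ContinuousOn.aestronglyMeasurable ?_ measurableSet_Ioi
    apply ContinuousOn.mul ?_ (Real.continuous_exp.comp continuous_neg).continuousOn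
    apply ContinuousOn.log
    · fun_prop
    · intro x hx
      simp only [Set.mem_Ioi] at hx
      positivity
  · rw [MeasureTheory.ae_restrict_iff' measurableSet_Ioi]
    refine Filter.Eventually.of_forall (fun x hx => ?_)
    simp only [Set.mem_Ioi] at hx
    have h1 : (0:ℝ) ≤ Real.log (1 + x/t) := Real.log_nonneg (by have := div_pos hx ht; linarith)
    rw [norm_mul, Real.norm_eq_abs, Real.norm_eq_abs, abs_of_nonneg h1,
      abs_of_pos (Real.exp_pos _), pow_one]
    have h2 : Real.log (1 + x/t) ≤ x/t := by
      have := Real.log_le_sub_one_of_pos (show (0:ℝ) < 1 + x/t by positivity)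
      linarith
    have h3 : (0:ℝ) < Real.exp (-x) := Real.exp_pos _
    calc Real.log (1 + x/t) * Real.exp (-x) ≤ (x/t) * Real.exp (-x) := by
          exact mul_le_mul_of_nonneg_right h2 h3.le
      _ = 1/t * (x * Real.exp (-x)) := by ring

lemma one_sub_mul_muRho (t : ℝ) (ht : 0 < t) : (1 - 2/t)/t ≤ 1 - t * muRho 0 t := by
  have i1 := (integ_pow_exp 1).const_mul (1/t)
  have i2 := (integ_pow_exp 2).const_mul (-(1/(2*t^2)))
  have i3 := (integ_pow_exp 3).const_mul (1/(3*t^3))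
  have hcombo : IntegrableOn
      (fun x : ℝ => (1/t) * (x^1*Real.exp (-x)) + (-(1/(2*t^2))) * (x^2*Real.exp (-x))
        + (1/(3*t^3)) * (x^3*Real.exp (-x))) (Set.Ioi 0) := (i1.add i2).add i3
  have hint : ∫ x in Set.Ioi (0:ℝ), ((1/t) * (x^1*Real.exp (-x))
      + (-(1/(2*t^2))) * (x^2*Real.exp (-x)) + (1/(3*t^3)) * (x^3*Real.exp (-x)))
      = 1/t - 1/t^2 + 2/t^3 := by
    have A := MeasureTheory.integral_add (i1.add i2) i3
    simp only [Pi.add_apply] at A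
    rw [A, MeasureTheory.integral_add i1 i2,
      MeasureTheory.integral_const_mul, MeasureTheory.integral_const_mul,
      MeasureTheory.integral_const_mul, int_pow_exp, int_pow_exp, int_pow_exp]
    norm_num [Nat.factorial]
    field_simp
    ring
  have hmono : muRho 0 t ≤ 1/t - 1/t^2 + 2/t^3 := by
    rw [muRho_zero_eq t ht, ← hint]
    apply setIntegral_mono_on (integrable_log_exp t ht) hcombo measurableSet_Ioi
    intro x hx
    simp only [Set.mem_Ioi] at hx
    have hb := log_cubic (x/t) (by positivity)
    have he : (0:ℝ) < Real.exp (-x) := Real.exp_pos _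
    have h2 : (x/t) - (x/t)^2/2 + (x/t)^3/3 = 1/t * x^1 + (-(1/(2*t^2))) * x^2
        + (1/(3*t^3)) * x^3 := by field_simp; ring
    calc Real.log (1 + x/t) * Real.exp (-x)
        ≤ ((x/t) - (x/t)^2/2 + (x/t)^3/3) * Real.exp (-x) :=
          mul_le_mul_of_nonneg_right hb he.le
      _ = _ := by rw [h2]; ring
  have heq : (1-2/t)/t = 1 - t*(1/t - 1/t^2 + 2/t^3) := by field_simp; ring
  have := mul_le_mul_of_nonneg_left hmono ht.le
  linarith

lemma image_exp_neg : (fun x : ℝ => Real.exp (-x)) '' (Set.Ioi 0) = Set.Ioo 0 1 := by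
  ext y
  constructor
  · rintro ⟨x, hx, rfl⟩
    simp only [Set.mem_Ioi] at hx
    exact ⟨Real.exp_pos _, Real.exp_lt_one_iff.mpr (by linarith)⟩
  · rintro ⟨hy0, hy1⟩
    refine ⟨-Real.log y, ?_, by simp [Real.exp_log hy0]⟩
    simp only [Set.mem_Ioi]
    have := Real.log_neg hy0 hy1
    linarith

lemma hderiv_exp_neg : ∀ x ∈ Set.Ioi (0:ℝ),
    HasDerivWithinAt (fun x : ℝ => Real.exp (-x)) (-Real.exp (-x)) (Set.Ioi 0) x := by
  intro x _
  have h : HasDerivAt (fun x : ℝ => Real.exp (-x)) (Real.exp (-x) * (-1)) x :=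
    (hasDerivAt_id x).neg.exp
  simpa [mul_neg_one] using h.hasDerivWithinAt

lemma hinj_exp_neg : Set.InjOn (fun x : ℝ => Real.exp (-x)) (Set.Ioi 0) :=
  (Real.exp_injective.comp neg_injective).injOn

lemma muRho_subst (t : ℝ) (ht : 0 < t) :
    (∫ s in Set.Ioo (0:ℝ) 1, Real.log (1 - Real.log s / t)) = muRho 0 t := by
  have h := MeasureTheory.integral_image_eq_integral_abs_deriv_smul measurableSet_Ioi
    hderiv_exp_neg hinj_exp_neg (fun s => Real.log (1 - Real.log s / t))
  rw [image_exp_neg] at h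
  rw [h, muRho_zero_eq t ht]
  apply setIntegral_congr_fun measurableSet_Ioi
  intro x hx
  simp only [abs_neg, abs_of_pos (Real.exp_pos _), smul_eq_mul, Real.log_exp]
  rw [neg_div, sub_neg_eq_add]
  ring

lemma integrable_G (t : ℝ) (ht : 0 < t) :
    IntegrableOn (fun s : ℝ => Real.log (1 - Real.log s / t)) (Set.Ioo (0:ℝ) 1) := by
  have h := MeasureTheory.integrableOn_image_iff_integrableOn_abs_deriv_smul measurableSet_Ioi
    hderiv_exp_neg hinj_exp_neg (fun s => Real.log (1 - Real.log s / t))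
  rw [image_exp_neg] at h
  rw [h]
  apply (integrable_log_exp t ht).congr_fun ?_ measurableSet_Ioi
  intro x hx
  simp only [abs_neg, abs_of_pos (Real.exp_pos _), smul_eq_mul, Real.log_exp]
  rw [neg_div, sub_neg_eq_add]
  ring

lemma sum_lt_muRho (t : ℝ) (ht : 0 < t) (k : ℕ) (hk : 2 ≤ k) :
    (1/(k:ℝ)) * ∑ i ∈ Finset.Icc 1 k, Real.log (1 - Real.log ((i:ℝ)/(k:ℝ)) / t)
      < muRho 0 t := by
  set G : ℝ → ℝ := fun s => Real.log (1 - Real.log s / t) with hG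
  have hk0 : (0:ℝ) < k := by
    have : (0:ℕ) < k := by omega
    exact_mod_cast this
  -- antitonicity of G
  have hmonoG : ∀ s s' : ℝ, 0 < s → s ≤ s' → s' ≤ 1 → G s' ≤ G s := by
    intro s s' hs hss' hs'1
    have hs'0 : 0 < s' := lt_of_lt_of_le hs hss'
    have h1 : Real.log s ≤ Real.log s' := Real.log_le_log hs hss'
    have h2 : Real.log s' ≤ 0 := Real.log_nonpos hs'0.le hs'1
    have h3 : Real.log s' / t ≤ 0 := div_nonpos_of_nonpos_of_nonneg h2 ht.le
    have h4 : (0:ℝ) < 1 - Real.log s' / t := by linarith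
    apply Real.log_le_log h4
    have : Real.log s / t ≤ Real.log s' / t := (div_le_div_iff_of_pos_right ht).mpr h1
    linarith
  have hGpos : ∀ x : ℝ, 0 < x → x < 1 → 0 < G x := by
    intro x hx0 hx1
    apply Real.log_pos
    have h1 : Real.log x < 0 := Real.log_neg hx0 hx1
    have : 0 < -Real.log x / t := div_pos (by linarith) ht
    rw [neg_div] at this
    linarith
  have hG1 : G 1 = 0 := by simp [hG]
  set a : ℕ → ℝ := fun j => (j:ℝ)/(k:ℝ) with ha
  have ha0 : a 0 = 0 := by simp [ha]
  have hak : a k = 1 := by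
    simp only [ha]
    exact div_self hk0.ne'
  have hale : ∀ j : ℕ, a j ≤ a (j+1) := by
    intro j
    apply div_le_div_of_nonneg_right ?_ hk0.le
    push_cast; linarith
  -- integrability on Ioc 0 1 and subintervals
  have hGIoc : IntegrableOn G (Set.Ioc 0 1) := by
    rw [integrableOn_Ioc_iff_integrableOn_Ioo]
    exact integrable_G t ht
  have hsub : ∀ j : ℕ, j < k → Set.Ioc (a j) (a (j+1)) ⊆ Set.Ioc 0 1 := by
    intro j hj x hx
    constructor
    · exact lt_of_le_of_lt (by positivity) hx.1
    · refine hx.2.trans ?_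
      rw [div_le_one hk0]
      push_cast
      have : (j:ℝ) + 1 ≤ (k:ℝ) := by exact_mod_cast Nat.succ_le_of_lt hj
      linarith
  have hII : ∀ j : ℕ, j < k → IntervalIntegrable G volume (a j) (a (j+1)) := by
    intro j hj
    rw [intervalIntegrable_iff_integrableOn_Ioc_of_le (hale j)]
    exact hGIoc.mono_set (hsub j hj)
  -- per-term bound
  have hterm : ∀ j ∈ Finset.range k, (1/(k:ℝ)) * G (a (j+1)) ≤ ∫ x in (a j)..(a (j+1)), G x := by
    intro j hj
    rw [Finset.mem_range] at hj
    rw [intervalIntegral.integral_of_le (hale j)]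
    have hlen : a (j+1) - a j = 1/(k:ℝ) := by
      simp only [ha]
      push_cast
      field_simp; ring
    have hconst : ∫ _x in Set.Ioc (a j) (a (j+1)), G (a (j+1)) = (1/(k:ℝ)) * G (a (j+1)) := by
      rw [setIntegral_const, Real.volume_real_Ioc_of_le (hale j),
        hlen, smul_eq_mul]
    rw [← hconst]
    apply setIntegral_mono_on (integrableOn_const (by
        rw [Real.volume_Ioc]; exact ENNReal.ofReal_ne_top))
      (hGIoc.mono_set (hsub j hj)) measurableSet_Ioc
    intro x hx
    have hx01 := hsub j hj hx
    apply hmonoG x (a (j+1)) hx01.1 hx.2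
    rw [div_le_one hk0]
    push_cast
    have : (j:ℝ) + 1 ≤ (k:ℝ) := by exact_mod_cast Nat.succ_le_of_lt hj
    linarith
  -- strictness at the last interval
  have hstrict : ∑ j ∈ Finset.range k, (1/(k:ℝ)) * G (a (j+1))
      < ∑ j ∈ Finset.range k, ∫ x in (a j)..(a (j+1)), G x := by
    apply Finset.sum_lt_sum hterm
    obtain ⟨m, rfl⟩ : ∃ m, k = m + 1 := ⟨k-1, by omega⟩
    refine ⟨m, Finset.mem_range.mpr (by omega), ?_⟩
    have hGak : G (a (m+1)) = 0 := by rw [hak, hG1]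
    rw [hGak, mul_zero]
    apply intervalIntegral.intervalIntegral_pos_of_pos_on (hII m (by omega)) ?_ ?_
    · intro x hx
      rw [hak] at hx
      refine hGpos x ?_ hx.2
      refine lt_of_le_of_lt ?_ hx.1
      have : (0:ℝ) ≤ (m:ℝ) := Nat.cast_nonneg m
      exact div_nonneg this hk0.le
    · rw [show a (m+1) = 1 from hak]
      show ((m:ℝ))/((m+1:ℕ):ℝ) < 1
      rw [div_lt_one hk0]
      push_cast
      linarith
  -- sum over adjacent intervals
  have hadj : ∑ j ∈ Finset.range k, ∫ x in (a j)..(a (j+1)), G x = ∫ x in (0:ℝ)..1, G x := by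
    rw [intervalIntegral.sum_integral_adjacent_intervals hII, ha0, hak]
  -- rewrite the Icc sum
  have hicc : (1/(k:ℝ)) * ∑ i ∈ Finset.Icc 1 k, Real.log (1 - Real.log ((i:ℝ)/(k:ℝ)) / t)
      = ∑ j ∈ Finset.range k, (1/(k:ℝ)) * G (a (j+1)) := by
    rw [Finset.mul_sum, ← Finset.Ico_add_one_right_eq_Icc, Finset.sum_Ico_eq_sum_range]
    apply Finset.sum_congr rfl
    intro j _
    congr 2
    simp only [ha]
    push_cast
    ring
  rw [hicc, ← muRho_subst t ht]
  refine hstrict.trans_le ?_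
  rw [hadj, intervalIntegral.integral_of_le zero_le_one,
    MeasureTheory.integral_Ioc_eq_integral_Ioo]


lemma sum_pos_aux (t : ℝ) (ht : 0 < t) (k : ℕ) (hk : 2 ≤ k) :
    0 < (1/(k:ℝ)) * ∑ i ∈ Finset.Icc 1 k, Real.log (1 - Real.log ((i:ℝ)/(k:ℝ)) / t) := by
  have hk0 : (0:ℝ) < k := by exact_mod_cast (by omega : 0 < k)
  apply mul_pos (by positivity)
  apply Finset.sum_pos'
  · intro i hi
    rw [Finset.mem_Icc] at hi
    apply Real.log_nonneg
    have hi0 : (0:ℝ) < i := by exact_mod_cast (by omega : 0 < i)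
    have hle : (i:ℝ)/(k:ℝ) ≤ 1 := by
      rw [div_le_one hk0]; exact_mod_cast hi.2
    have h2 := Real.log_nonpos (by positivity) hle
    have hdiv : Real.log ((i:ℝ)/(k:ℝ)) / t ≤ 0 := div_nonpos_of_nonpos_of_nonneg h2 ht.le
    linarith
  · refine ⟨1, Finset.mem_Icc.mpr ⟨le_refl 1, by omega⟩, ?_⟩
    apply Real.log_pos
    have h1 : ((1:ℕ):ℝ)/(k:ℝ) < 1 := by
      rw [div_lt_one hk0]; exact_mod_cast (by omega : 1 < k)
    have h2 : Real.log (((1:ℕ):ℝ)/(k:ℝ)) < 0 := Real.log_neg (by positivity) h1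
    have h3 := div_neg_of_neg_of_pos h2 ht
    linarith

end AMSEAux

theorem amse_comparison_positive_bias_small_beta
    (θ ρ : ℝ) (hθpos : 0 < θ) (hρ : ρ ≤ 0)
    (b : ℝ → ℝ) (hb0 : Tendsto b atTop (𝓝 0))
    (hRV : RegularlyVarying (fun x => |b x|) ρ)
    (k : ℕ → ℕ) (hkbd : ∀ n, 2 ≤ n → 1 ≤ k n ∧ k n < n)
    (hk : Tendsto (fun n => (k n : ℝ)) atTop atTop)
    (hC2 : Tendsto (fun n : ℕ => Real.log (k n) / Real.log n) atTop (𝓝 0))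
    (lam : ℝ)
    (hlam : Tendsto (fun n => Real.sqrt (k n) * b (Real.log ((n : ℝ) / (k n : ℝ))))
      atTop (𝓝 lam))
    -- the three normalizing sequences and the associated bias terms
    (T1 T2 T3 a1 a2 a3 : ℕ → ℝ)
    (hT1 : ∀ n, T1 n = muRho 0 (Real.log ((n : ℝ) / (k n : ℝ))))
    (hT2 : ∀ n, T2 n = (1 / (k n : ℝ)) * ∑ i ∈ Finset.Icc 1 (k n),
      Real.log (1 - Real.log ((i : ℝ) / (k n : ℝ)) / Real.log ((n : ℝ) / (k n : ℝ))))
    (hT3 : ∀ n, T3 n = 1 / Real.log ((n : ℝ) / (k n : ℝ)))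
    (ha1 : ∀ n, a1 n = muRho 0 (Real.log ((n : ℝ) / (k n : ℝ))) / T1 n - 1)
    (ha2 : ∀ n, a2 n = muRho 0 (Real.log ((n : ℝ) / (k n : ℝ))) / T2 n - 1)
    (ha3 : ∀ n, a3 n = muRho 0 (Real.log ((n : ℝ) / (k n : ℝ))) / T3 n - 1)
    -- the asymptotic mean square errors of the three estimators
    (AMSE1 AMSE2 AMSE3 : ℕ → ℝ)
    (hAMSE1 : ∀ n, AMSE1 n =
      (θ * a1 n + b (Real.log ((n : ℝ) / (k n : ℝ)))) ^ 2 + θ ^ 2 / (k n : ℝ))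
    (hAMSE2 : ∀ n, AMSE2 n =
      (θ * a2 n + b (Real.log ((n : ℝ) / (k n : ℝ)))) ^ 2 + θ ^ 2 / (k n : ℝ))
    (hAMSE3 : ∀ n, AMSE3 n =
      (θ * a3 n + b (Real.log ((n : ℝ) / (k n : ℝ)))) ^ 2 + θ ^ 2 / (k n : ℝ))
    (hbpos : ∀ᶠ x in atTop, 0 ≤ b x)
    (β : EReal) (hβ0 : 0 ≤ β)
    (hβ : Tendsto (fun x : ℝ => ((2 * x * b x : ℝ) : EReal)) atTop (𝓝 β))
    (hβθ : β < (θ : EReal)) :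
    ∀ᶠ n in atTop, AMSE1 n < min (AMSE2 n) (AMSE3 n) := by
  classical
  -- β is a finite real
  have hβtop : β ≠ ⊤ := hβθ.ne_top
  have hβbot : β ≠ ⊥ := (lt_of_lt_of_le EReal.bot_lt_zero hβ0).ne'
  set βr := β.toReal with hβr_def
  have hcoe : (βr : EReal) = β := EReal.coe_toReal hβtop hβbot
  have hβrθ : βr < θ := by
    rw [← hcoe] at hβθ
    exact_mod_cast hβθ
  have h2xb : Filter.Tendsto (fun x => 2*x*b x) atTop (𝓝 βr) := by
    apply EReal.tendsto_coe.mp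
    rw [hcoe]
    exact hβ
  set r : ℝ := (βr + θ)/2 with hr_def
  have hβr_r : βr < r := by linarith
  have hrθ : r < θ := by linarith
  have hev1 : ∀ᶠ x in atTop, 2*x*b x < r := h2xb.eventually_lt_const hβr_r
  -- the sequence t n tends to infinity
  set t : ℕ → ℝ := fun n => Real.log ((n : ℝ) / (k n : ℝ)) with ht_def
  have hlogn : Filter.Tendsto (fun n : ℕ => Real.log n) atTop atTop :=
    Real.tendsto_log_atTop.comp tendsto_natCast_atTop_atTop
  have hfac : Filter.Tendsto (fun n : ℕ => 1 - Real.log (k n)/Real.log n) atTop (𝓝 1) := by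
    have := (tendsto_const_nhds (x := (1:ℝ)) (f := atTop (α := ℕ))).sub hC2
    simpa using this
  have hmul : Filter.Tendsto (fun n : ℕ => Real.log n * (1 - Real.log (k n)/Real.log n))
      atTop atTop := Filter.Tendsto.atTop_mul_pos one_pos hlogn hfac
  have ht_top : Filter.Tendsto t atTop atTop := by
    apply hmul.congr'
    filter_upwards [Filter.eventually_ge_atTop 2, hlogn.eventually_gt_atTop 0] with n hn2 hlogpos
    obtain ⟨hk1, hkn⟩ := hkbd n hn2
    have hkpos : (0:ℝ) < (k n : ℝ) := by exact_mod_cast (by omega : 0 < k n)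
    have hnpos : (0:ℝ) < (n : ℝ) := by
      have : (0:ℕ) < n := by omega
      exact_mod_cast this
    rw [ht_def]
    simp only []
    rw [Real.log_div hnpos.ne' hkpos.ne']
    field_simp
  -- collect eventual facts
  have hev_t3 : ∀ᶠ n in atTop, (3:ℝ) ≤ t n := ht_top.eventually (Filter.eventually_ge_atTop 3)
  have hev_bnn : ∀ᶠ n in atTop, 0 ≤ b (t n) := ht_top.eventually hbpos
  have hev_r : ∀ᶠ n in atTop, 2 * t n * b (t n) < r := ht_top.eventually hev1
  have hev_theta : ∀ᶠ n in atTop, r < θ * (1 - 2 / t n) := by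
    have hdiv : Filter.Tendsto (fun n => (2:ℝ) / t n) atTop (𝓝 0) :=
      Filter.Tendsto.div_atTop tendsto_const_nhds ht_top
    have h1 : Filter.Tendsto (fun n => θ * (1 - 2 / t n)) atTop (𝓝 θ) := by
      have := (tendsto_const_nhds (x := (1:ℝ)) (f := atTop (α := ℕ))).sub hdiv
      have h2 := this.const_mul θ
      simpa using h2
    exact h1.eventually_const_lt hrθ
  have hev_k2 : ∀ᶠ n in atTop, 2 ≤ k n := by
    filter_upwards [hk.eventually (Filter.eventually_ge_atTop (2:ℝ))] with n hn
    exact_mod_cast hn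
  filter_upwards [hev_t3, hev_bnn, hev_r, hev_theta, hev_k2] with n ht3 hbnn hrn hthetan hk2
  -- abbreviations
  have ht0 : 0 < t n := by linarith
  have hsum_lt := AMSEAux.sum_lt_muRho (t n) ht0 (k n) hk2
  have hsum_pos := AMSEAux.sum_pos_aux (t n) ht0 (k n) hk2
  have hT2lt : T2 n < muRho 0 (t n) := by rw [hT2 n]; exact hsum_lt
  have hT2pos : 0 < T2 n := by rw [hT2 n]; exact hsum_pos
  have hμpos : 0 < muRho 0 (t n) := hT2pos.trans hT2lt
  -- a1 = 0
  have ha1n : a1 n = 0 := by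
    rw [ha1 n, hT1 n, div_self hμpos.ne']
    ring
  -- a2 > 0
  have ha2n : 0 < a2 n := by
    rw [ha2 n]
    have : 1 < muRho 0 (t n) / T2 n := (one_lt_div hT2pos).mpr hT2lt
    linarith
  -- a3 = t*μ - 1
  have ha3n : a3 n = muRho 0 (t n) * t n - 1 := by
    rw [ha3 n, hT3 n]
    rw [div_div_eq_mul_div, div_one]
  -- key bias bound
  have hkey := AMSEAux.one_sub_mul_muRho (t n) ht0
  have h2b : 2 * b (t n) < θ * (1 - t n * muRho 0 (t n)) := by
    have l0 : 2 * t n * b (t n) < θ * (1 - 2 / t n) := hrn.trans hthetan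
    have l4 : 2 * b (t n) = (2 * t n * b (t n)) / t n := by
      rw [eq_div_iff ht0.ne']; ring
    rw [l4]
    calc (2 * t n * b (t n)) / t n < (θ * (1 - 2 / t n)) / t n :=
          (div_lt_div_iff_of_pos_right ht0).mpr l0
      _ = θ * ((1 - 2 / t n) / t n) := by ring
      _ ≤ θ * (1 - t n * muRho 0 (t n)) := by
          apply mul_le_mul_of_nonneg_left hkey hθpos.le
  -- final comparisons
  have hbt : b (Real.log ((n:ℝ) / ((k n):ℝ))) = b (t n) := rfl
  have hA1 : AMSE1 n = (b (t n))^2 + θ^2/(k n : ℝ) := by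
    rw [hAMSE1 n, ha1n, hbt]
    ring
  have hA2 : AMSE1 n < AMSE2 n := by
    rw [hA1, hAMSE2 n, hbt]
    have hpos : 0 < θ * a2 n := mul_pos hθpos ha2n
    have : (b (t n))^2 < (θ * a2 n + b (t n))^2 := by nlinarith
    linarith
  have hA3 : AMSE1 n < AMSE3 n := by
    rw [hA1, hAMSE3 n, hbt]
    have hc : θ * a3 n + b (t n) = b (t n) - θ * (1 - t n * muRho 0 (t n)) := by
      rw [ha3n]; ring
    have : (b (t n))^2 < (θ * a3 n + b (t n))^2 := by
      rw [hc]
      nlinarith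
    linarith
  exact lt_min hA2 hA3
end
end

section
/- For all ρ ≤ 0 and every positive integer q, ∫_0^∞ K_ρ(1 + x/t)^q e^{−x} dx ∼ q!/t^q as t → ∞, i.e. t^q·∫_0^∞ K_ρ(1 + x/t)^q e^{−x} dx → q! as t → ∞. -/
open MeasureTheory ProbabilityTheory Filter Real Topology

noncomputable section

lemma Krho_eq_of_ne (ρ : ℝ) (hρ : ρ ≠ 0) {l : ℝ} (hl : 0 < l) :
    Krho ρ l = (l ^ ρ - 1) / ρ := by
  unfold Krho
  rw [integral_rpow (Or.inr ⟨by intro h; apply hρ; linarith, by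
    simp only [Set.mem_uIcc]; push_neg
    constructor <;> intro h <;> nlinarith⟩)]
  have : ρ - 1 + 1 = ρ := by ring
  rw [this, Real.one_rpow]

lemma Krho_zero_eq {l : ℝ} (hl : 0 < l) : Krho 0 l = Real.log l := by
  unfold Krho
  have h0 : (0:ℝ) ∉ Set.uIcc 1 l := by
    simp only [Set.mem_uIcc]; push_neg
    constructor <;> intro h <;> nlinarith
  have : ∀ u ∈ Set.uIcc (1:ℝ) l, u ^ ((0:ℝ) - 1) = u⁻¹ := by
    intro u hu
    have hu0 : u ≠ 0 := fun h => h0 (h ▸ hu)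
    rw [show (0:ℝ) - 1 = -1 by ring, Real.rpow_neg_one]
  rw [intervalIntegral.integral_congr this, integral_inv h0, div_one]

lemma Krho_continuousOn (ρ : ℝ) : ContinuousOn (Krho ρ) (Set.Ioi 0) := by
  rcases eq_or_ne ρ 0 with rfl | hρ
  · exact (Real.continuousOn_log.mono (by intro x hx; exact ne_of_gt hx)).congr
      fun l hl => Krho_zero_eq hl
  · have : ContinuousOn (fun l : ℝ => (l ^ ρ - 1) / ρ) (Set.Ioi 0) :=
      (((continuousOn_id.rpow_const fun x hx => Or.inl (ne_of_gt hx)).sub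
        continuousOn_const).div_const ρ)
    exact this.congr fun l hl => Krho_eq_of_ne ρ hρ hl

lemma Krho_intervalIntegrable (ρ : ℝ) {l : ℝ} (hl : 1 ≤ l) :
    IntervalIntegrable (fun u : ℝ => u ^ (ρ - 1)) volume 1 l := by
  apply ContinuousOn.intervalIntegrable
  apply continuousOn_id.rpow_const
  intro x hx
  rw [Set.uIcc_of_le hl] at hx
  simp only [id_eq]
  exact Or.inl (by intro h; rw [h] at hx; linarith [hx.1])

lemma Krho_nonneg (ρ : ℝ) {l : ℝ} (hl : 1 ≤ l) : 0 ≤ Krho ρ l := by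
  apply intervalIntegral.integral_nonneg hl
  intro u hu
  exact Real.rpow_nonneg (by linarith [hu.1]) _

lemma Krho_le (ρ : ℝ) (hρ : ρ ≤ 0) {l : ℝ} (hl : 1 ≤ l) : Krho ρ l ≤ l - 1 := by
  have : Krho ρ l ≤ ∫ _ in (1:ℝ)..l, (1:ℝ) := by
    apply intervalIntegral.integral_mono_on hl (Krho_intervalIntegrable ρ hl)
      intervalIntegrable_const
    intro u hu
    exact Real.rpow_le_one_of_one_le_of_nonpos hu.1 (by linarith)
  simpa using this

lemma le_Krho (ρ : ℝ) (hρ : ρ ≤ 0) {l : ℝ} (hl : 1 ≤ l) : l ^ (ρ - 1) * (l - 1) ≤ Krho ρ l := by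
  have : ∫ _ in (1:ℝ)..l, l ^ (ρ - 1) ≤ Krho ρ l := by
    apply intervalIntegral.integral_mono_on hl intervalIntegrable_const
      (Krho_intervalIntegrable ρ hl)
    intro u hu
    exact Real.rpow_le_rpow_of_nonpos (by linarith [hu.1]) hu.2 (by linarith [hρ])
  simpa [mul_comm] using this

lemma bound_integrable (q : ℕ) :
    IntegrableOn (fun x : ℝ => x ^ q * Real.exp (-x)) (Set.Ioi 0) := by
  have h := Real.GammaIntegral_convergent (s := (q:ℝ) + 1) (by positivity)
  apply h.congr_fun _ measurableSet_Ioi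
  intro x hx
  simp only [show ((q:ℝ) + 1) - 1 = (q:ℝ) by ring, Real.rpow_natCast]
  ring

lemma integral_pow_exp (q : ℕ) :
    ∫ x in Set.Ioi (0:ℝ), x ^ q * Real.exp (-x) = (q.factorial : ℝ) := by
  have h := Real.Gamma_eq_integral (s := (q:ℝ) + 1) (by positivity)
  have h2 : Real.Gamma ((q:ℝ) + 1) = (q.factorial : ℝ) := by
    exact_mod_cast Real.Gamma_nat_eq_factorial q
  rw [h2] at h
  have h3 : ∫ x in Set.Ioi (0:ℝ), x ^ q * Real.exp (-x)
      = ∫ x in Set.Ioi (0:ℝ), Real.exp (-x) * x ^ (((q:ℝ) + 1) - 1) := by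
    apply setIntegral_congr_fun measurableSet_Ioi
    intro x hx
    simp only [show ((q:ℝ) + 1) - 1 = (q:ℝ) by ring, Real.rpow_natCast]
    ring
  rw [h3, ← h]

theorem Krho_moment_asymptotics
    (ρ : ℝ) (hρ : ρ ≤ 0) (q : ℕ) (hq : 0 < q) :
    Tendsto (fun t : ℝ =>
        t ^ q * ∫ x in Set.Ioi (0:ℝ), (Krho ρ (1 + x / t)) ^ q * Real.exp (-x))
      atTop (𝓝 (q.factorial : ℝ)) := by
  have key : Tendsto (fun t : ℝ =>
      ∫ x in Set.Ioi (0:ℝ), (t * Krho ρ (1 + x / t)) ^ q * Real.exp (-x))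
      atTop (𝓝 (∫ x in Set.Ioi (0:ℝ), x ^ q * Real.exp (-x))) := by
    apply tendsto_integral_filter_of_dominated_convergence
      (fun x : ℝ => x ^ q * Real.exp (-x))
    · -- measurability
      filter_upwards [eventually_ge_atTop (1:ℝ)] with t ht
      have hcont : ContinuousOn (fun x : ℝ => (t * Krho ρ (1 + x / t)) ^ q * Real.exp (-x))
          (Set.Ioi 0) := by
        have h1 : ContinuousOn (fun x : ℝ => Krho ρ (1 + x / t)) (Set.Ioi 0) := by
          apply (Krho_continuousOn ρ).comp (by fun_prop)
          intro x hx
          have : 0 < x / t := div_pos hx (by linarith)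
          exact Set.mem_Ioi.2 (by linarith)
        exact ((continuousOn_const.mul h1).pow q).mul (by fun_prop)
      exact hcont.aestronglyMeasurable measurableSet_Ioi
    · -- bound
      filter_upwards [eventually_ge_atTop (1:ℝ)] with t ht
      rw [ae_restrict_iff' measurableSet_Ioi]
      filter_upwards with x hx
      have ht0 : (0:ℝ) < t := by linarith
      have hx0 : (0:ℝ) < x := hx
      have hl : (1:ℝ) ≤ 1 + x / t := by
        have : 0 < x / t := div_pos hx0 ht0
        linarith
      have hK0 : 0 ≤ Krho ρ (1 + x / t) := Krho_nonneg ρ hl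
      have hK : Krho ρ (1 + x / t) ≤ x / t := by
        have := Krho_le ρ hρ hl
        simpa using this
      have h1 : 0 ≤ t * Krho ρ (1 + x / t) := mul_nonneg ht0.le hK0
      have h2 : t * Krho ρ (1 + x / t) ≤ x := by
        calc t * Krho ρ (1 + x / t) ≤ t * (x / t) := by nlinarith
        _ = x := by field_simp
      rw [Real.norm_eq_abs, abs_mul, abs_of_nonneg (pow_nonneg h1 q),
        abs_of_nonneg (Real.exp_pos _).le]
      exact mul_le_mul_of_nonneg_right (pow_le_pow_left₀ h1 h2 q) (Real.exp_pos _).le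
    · exact bound_integrable q
    · -- ae pointwise limit
      rw [ae_restrict_iff' measurableSet_Ioi]
      filter_upwards with x hx
      have hx0 : (0:ℝ) < x := hx
      have hmain : Tendsto (fun t : ℝ => t * Krho ρ (1 + x / t)) atTop (𝓝 x) := by
        have hdiv : Tendsto (fun t : ℝ => x / t) atTop (𝓝 0) :=
          tendsto_const_nhds.div_atTop tendsto_id
        have hbase : Tendsto (fun t : ℝ => 1 + x / t) atTop (𝓝 1) := by
          simpa using tendsto_const_nhds.add hdiv
        have hlow : Tendsto (fun t : ℝ => x * (1 + x / t) ^ (ρ - 1)) atTop (𝓝 x) := by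
          have hr : Tendsto (fun t : ℝ => (1 + x / t) ^ (ρ - 1)) atTop (𝓝 1) := by
            have hc : ContinuousAt (fun y : ℝ => y ^ (ρ - 1)) 1 :=
              Real.continuousAt_rpow_const 1 (ρ - 1) (Or.inl one_ne_zero)
            have := hc.tendsto.comp hbase
            simpa [Real.one_rpow, Function.comp_def] using this
          simpa using tendsto_const_nhds.mul hr
        apply tendsto_of_tendsto_of_tendsto_of_le_of_le' hlow tendsto_const_nhds
        · filter_upwards [eventually_gt_atTop (0:ℝ)] with t ht
          have hl : (1:ℝ) ≤ 1 + x / t := by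
            have : 0 < x / t := div_pos hx0 ht
            linarith
          have := le_Krho ρ hρ hl
          have hxt : (1 + x / t) - 1 = x / t := by ring
          rw [hxt] at this
          calc x * (1 + x / t) ^ (ρ - 1) = t * ((1 + x / t) ^ (ρ - 1) * (x / t)) := by
                field_simp
          _ ≤ t * Krho ρ (1 + x / t) := by
                apply mul_le_mul_of_nonneg_left this ht.le
        · filter_upwards [eventually_gt_atTop (0:ℝ)] with t ht
          have hl : (1:ℝ) ≤ 1 + x / t := by
            have : 0 < x / t := div_pos hx0 ht
            linarith
          have hK := Krho_le ρ hρ hl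
          calc t * Krho ρ (1 + x / t) ≤ t * ((1 + x / t) - 1) :=
                mul_le_mul_of_nonneg_left hK ht.le
          _ = x := by field_simp; ring
      exact (hmain.pow q).mul tendsto_const_nhds
  rw [← integral_pow_exp q]
  apply key.congr
  intro t
  rw [← integral_const_mul]
  apply setIntegral_congr_fun measurableSet_Ioi
  intro x hx
  simp only [mul_pow]; ring
end
end

section
/- Let k_n → ∞ and k_n/n → 0, and define T_n^{(2)} = (1/k_n)·Σ_{i=1}^{k_n} log(1 − log(i/k_n)/log(n/k_n)) and a_n^{(2)} = μ_0(log(n/k_n))/T_n^{(2)} − 1. Then (i) T_n^{(2)}·log(n/k_n) → 1; and (ii) if moreover log(k_n)/log(n) → 0, then a_n^{(2)} ∼ log(k_n)/(2k_n), i.e. a_n^{(2)}·2k_n/log(k_n) → 1. -/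
open MeasureTheory ProbabilityTheory Filter Real Topology
open Set Finset

noncomputable section

lemma log1p_le {y : ℝ} (hy : 0 ≤ y) : Real.log (1 + y) ≤ y := by
  have := Real.log_le_sub_one_of_pos (show (0:ℝ) < 1 + y by linarith)
  linarith

lemma le_log1p {y : ℝ} (hy : 0 ≤ y) : y - y ^ 2 ≤ Real.log (1 + y) := by
  have h1 : (0:ℝ) < 1 + y := by linarith
  have h2 : Real.log (1 + y)⁻¹ ≤ (1 + y)⁻¹ - 1 :=
    Real.log_le_sub_one_of_pos (by positivity)
  rw [Real.log_inv] at h2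
  have h3 : 1 - (1+y)⁻¹ ≤ Real.log (1 + y) := by linarith
  have he : 1 - (1+y)⁻¹ = y / (1+y) := by field_simp; ring
  have h4 : y - y ^ 2 ≤ y / (1 + y) := by
    rw [le_div_iff₀ h1]; nlinarith
  linarith [he ▸ h3]

/-- `ψ_t(x) = t log(1 + x/t) - x`. -/
def psi (t x : ℝ) : ℝ := t * Real.log (1 + x / t) - x

lemma psi_nonpos {t x : ℝ} (ht : 0 < t) (hx : 0 ≤ x) : psi t x ≤ 0 := by
  have h := log1p_le (y := x / t) (by positivity)
  have : t * Real.log (1 + x / t) ≤ t * (x / t) := by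
    exact mul_le_mul_of_nonneg_left h ht.le
  have he : t * (x/t) = x := by field_simp
  rw [psi]; nlinarith

lemma psi_ge {t x : ℝ} (ht : 0 < t) (hx : 0 ≤ x) : -(x ^ 2 / t) ≤ psi t x := by
  have h := le_log1p (y := x / t) (by positivity)
  have h2 : t * (x / t - (x / t) ^ 2) ≤ t * Real.log (1 + x / t) :=
    mul_le_mul_of_nonneg_left h ht.le
  rw [psi]
  have he : t * (x / t - (x / t) ^ 2) = x - x ^ 2 / t := by field_simp
  linarith [he ▸ h2]

lemma psi_abs_le {t x : ℝ} (ht : 0 < t) (hx : 0 ≤ x) : |psi t x| ≤ x ^ 2 / t := by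
  rw [abs_le]
  constructor
  · simpa using psi_ge ht hx
  · have h1 := psi_nonpos ht hx
    have h2 : (0:ℝ) ≤ x^2/t := by positivity
    linarith

lemma psi_anti {t : ℝ} (ht : 0 < t) : AntitoneOn (psi t) (Set.Ici 0) := by
  intro x hx y hy hxy
  simp only [Set.mem_Ici] at hx hy
  have h1 : (0:ℝ) < 1 + x / t := by positivity
  have h2 : (0:ℝ) < 1 + y / t := by positivity
  have hlog : Real.log (1 + y / t) - Real.log (1 + x / t) = Real.log ((1 + y/t)/(1 + x/t)) := by
    rw [Real.log_div (by positivity) (by positivity)]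
  have hrw : (1 + y/t)/(1 + x/t) = 1 + (y - x)/(t + x) := by
    have htx : t + x ≠ 0 := by positivity
    field_simp
    ring
  have hb : Real.log (1 + (y - x)/(t + x)) ≤ (y - x)/(t + x) :=
    log1p_le (div_nonneg (by linarith) (by positivity))
  have : t * (Real.log (1 + y / t) - Real.log (1 + x / t)) ≤ t * ((y - x)/(t+x)) := by
    rw [hlog, hrw]; exact mul_le_mul_of_nonneg_left hb ht.le
  have hle : t * ((y - x)/(t+x)) ≤ y - x := by
    rw [mul_div_assoc', div_le_iff₀ (show (0:ℝ) < t + x by positivity)]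
    nlinarith [sub_nonneg.2 hxy]
  simp only [psi]
  nlinarith

lemma psi_continuousOn {t : ℝ} (ht : 0 < t) : ContinuousOn (psi t) (Set.Ici 0) := by
  apply ContinuousOn.sub _ continuousOn_id
  apply ContinuousOn.mul continuousOn_const
  apply ContinuousOn.log
  · exact (continuousOn_const.add (continuousOn_id.div_const t))
  · intro x hx
    simp only [Set.mem_Ici] at hx
    positivity


lemma hasDerivAt_exp_neg (x : ℝ) : HasDerivAt (fun x : ℝ => -Real.exp (-x)) (Real.exp (-x)) x := by
  have h := ((Real.hasDerivAt_exp (-x)).comp x (hasDerivAt_neg x)).neg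
  exact h.congr_deriv (by ring)

lemma integral_exp_neg_ftc (p q : ℝ) :
    ∫ x in p..q, Real.exp (-x) = Real.exp (-p) - Real.exp (-q) := by
  have := intervalIntegral.integral_eq_sub_of_hasDerivAt
    (f := fun x : ℝ => -Real.exp (-x)) (f' := fun x => Real.exp (-x))
    (fun x _ => hasDerivAt_exp_neg x)
    ((Real.continuous_exp.comp continuous_neg).intervalIntegrable p q)
  rw [this]; ring

lemma hasDerivAt_F2 (x : ℝ) :
    HasDerivAt (fun x : ℝ => -(x^2 + 2*x + 2) * Real.exp (-x)) (x^2 * Real.exp (-x)) x := by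
  have h1 : HasDerivAt (fun x : ℝ => -(x^2 + 2*x + 2)) (-(2*x + 2)) x := by
    have := (((hasDerivAt_pow 2 x).add ((hasDerivAt_id x).const_mul 2)).add_const 2).neg
    exact this.congr_deriv (by norm_num)
  have h2 : HasDerivAt (fun x : ℝ => Real.exp (-x)) (-Real.exp (-x)) x := by
    have := (Real.hasDerivAt_exp (-x)).comp x (hasDerivAt_neg x)
    exact this.congr_deriv (by ring)
  have := h1.mul h2
  exact this.congr_deriv (by ring)

lemma integral_x2_exp_neg_ftc (p q : ℝ) :
    ∫ x in p..q, x^2 * Real.exp (-x)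
      = (p^2 + 2*p + 2) * Real.exp (-p) - (q^2 + 2*q + 2) * Real.exp (-q) := by
  have hc : Continuous (fun x : ℝ => x^2 * Real.exp (-x)) := by continuity
  have := intervalIntegral.integral_eq_sub_of_hasDerivAt
    (fun x _ => hasDerivAt_F2 x) (hc.intervalIntegrable p q)
  rw [this]; ring

lemma integrableOn_x_exp_neg : IntegrableOn (fun x : ℝ => x * Real.exp (-x)) (Ioi 0) := by
  have h := Real.GammaIntegral_convergent (s := 2) (by norm_num)
  apply h.congr_fun _ measurableSet_Ioi
  intro x hx
  simp only [Set.mem_Ioi] at hx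
  show Real.exp (-x) * x ^ ((2:ℝ) - 1) = x * Real.exp (-x)
  rw [show (2:ℝ) - 1 = 1 by norm_num, Real.rpow_one]
  ring

lemma integrableOn_x2_exp_neg : IntegrableOn (fun x : ℝ => x^2 * Real.exp (-x)) (Ioi 0) := by
  have h := Real.GammaIntegral_convergent (s := 3) (by norm_num)
  apply h.congr_fun _ measurableSet_Ioi
  intro x hx
  simp only [Set.mem_Ioi] at hx
  show Real.exp (-x) * x ^ ((3:ℝ) - 1) = x ^ 2 * Real.exp (-x)
  rw [show (3:ℝ) - 1 = ((2:ℕ):ℝ) by norm_num, Real.rpow_natCast]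
  ring

lemma integral_x_exp_neg : ∫ x in Ioi (0:ℝ), x * Real.exp (-x) = 1 := by
  have hderiv : ∀ x ∈ Ici (0:ℝ),
      HasDerivAt (fun x : ℝ => -(x + 1) * Real.exp (-x)) (x * Real.exp (-x)) x := by
    intro x _
    have h1 : HasDerivAt (fun x : ℝ => -(x + 1)) (-1) x := by
      exact ((hasDerivAt_id x).add_const 1).neg
    have h2 : HasDerivAt (fun x : ℝ => Real.exp (-x)) (-Real.exp (-x)) x := by
      exact ((Real.hasDerivAt_exp (-x)).comp x (hasDerivAt_neg x)).congr_deriv (by ring)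
    exact (h1.mul h2).congr_deriv (by ring)
  have htend : Tendsto (fun x : ℝ => -(x + 1) * Real.exp (-x)) atTop (𝓝 0) := by
    have h1 := Real.tendsto_pow_mul_exp_neg_atTop_nhds_zero 1
    have h0 := Real.tendsto_pow_mul_exp_neg_atTop_nhds_zero 0
    have := (h1.add h0).neg
    simp only [pow_one, pow_zero, one_mul, add_zero, neg_zero] at this ⊢
    convert this using 2 with x
    ring
  have := integral_Ioi_of_hasDerivAt_of_tendsto' hderiv integrableOn_x_exp_neg htend
  simp at this
  convert this using 1


lemma integral_x2_exp_neg_Ioi {L : ℝ} (hL : 0 ≤ L) :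
    ∫ x in Ioi L, x^2 * Real.exp (-x) = (L^2 + 2*L + 2) * Real.exp (-L) := by
  have hint : IntegrableOn (fun x : ℝ => x^2 * Real.exp (-x)) (Ioi L) :=
    integrableOn_x2_exp_neg.mono_set (Ioi_subset_Ioi hL)
  have htend : Tendsto (fun x : ℝ => -(x^2+2*x+2) * Real.exp (-x)) atTop (𝓝 0) := by
    have h2 := Real.tendsto_pow_mul_exp_neg_atTop_nhds_zero 2
    have h1 := Real.tendsto_pow_mul_exp_neg_atTop_nhds_zero 1
    have h0 := Real.tendsto_pow_mul_exp_neg_atTop_nhds_zero 0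
    have := ((h2.add ((h1.const_mul 2).add (h0.const_mul 2)))).neg
    simp only [pow_one, pow_zero, one_mul] at this
    convert this using 2 with x
    · ring
    · norm_num
  have := integral_Ioi_of_hasDerivAt_of_tendsto' (fun x _ => hasDerivAt_F2 x) hint htend
  rw [this]; ring

lemma integrableOn_psi_exp_neg {t : ℝ} (ht : 1 ≤ t) :
    IntegrableOn (fun x => psi t x * Real.exp (-x)) (Ioi 0) := by
  have ht0 : (0:ℝ) < t := lt_of_lt_of_le one_pos ht
  apply Integrable.mono integrableOn_x2_exp_neg
  · apply ContinuousOn.aestronglyMeasurable _ measurableSet_Ioi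
    exact (((psi_continuousOn ht0).mono Ioi_subset_Ici_self).mul
      (Real.continuous_exp.comp continuous_neg).continuousOn)
  · rw [ae_restrict_iff' measurableSet_Ioi]
    filter_upwards with x hx
    simp only [Set.mem_Ioi] at hx
    have h1 := psi_abs_le ht0 hx.le
    simp only [norm_mul, Real.norm_eq_abs]
    have h2 : x^2/t ≤ x^2 := by
      rw [div_le_iff₀ ht0]; nlinarith
    have h3 : |x^2| = x^2 := abs_of_nonneg (by positivity)
    calc |psi t x| * |Real.exp (-x)| ≤ x^2 * |Real.exp (-x)| :=
          mul_le_mul_of_nonneg_right (le_trans h1 h2) (abs_nonneg _)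
      _ = |x^2| * |Real.exp (-x)| := by rw [h3]

lemma psi_tail_bound {t L : ℝ} (ht : 1 ≤ t) (hL : 0 ≤ L) :
    |∫ x in Ioi L, psi t x * Real.exp (-x)| ≤ (L^2 + 2*L + 2) * Real.exp (-L) / t := by
  have ht0 : (0:ℝ) < t := lt_of_lt_of_le one_pos ht
  have hint : IntegrableOn (fun x => psi t x * Real.exp (-x)) (Ioi L) :=
    (integrableOn_psi_exp_neg ht).mono_set (Ioi_subset_Ioi hL)
  have hint2 : IntegrableOn (fun x : ℝ => x^2 * Real.exp (-x) / t) (Ioi L) :=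
    (integrableOn_x2_exp_neg.mono_set (Ioi_subset_Ioi hL)).div_const t
  calc |∫ x in Ioi L, psi t x * Real.exp (-x)|
      ≤ ∫ x in Ioi L, |psi t x * Real.exp (-x)| := by
        have := norm_integral_le_integral_norm (μ := volume.restrict (Ioi L))
          (fun x => psi t x * Real.exp (-x))
        simpa only [Real.norm_eq_abs] using this
    _ ≤ ∫ x in Ioi L, x^2 * Real.exp (-x) / t := by
        apply setIntegral_mono_on hint.abs hint2 measurableSet_Ioi
        intro x hx
        simp only [Set.mem_Ioi] at hx
        have hx0 : (0:ℝ) ≤ x := le_trans hL hx.le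
        rw [abs_mul, abs_of_pos (Real.exp_pos _)]
        calc |psi t x| * Real.exp (-x) ≤ x^2/t * Real.exp (-x) :=
              mul_le_mul_of_nonneg_right (psi_abs_le ht0 hx0) (Real.exp_pos _).le
          _ = x^2 * Real.exp (-x) / t := by ring
    _ = (∫ x in Ioi L, x^2 * Real.exp (-x)) / t := by rw [integral_div]
    _ = (L^2 + 2*L + 2) * Real.exp (-L) / t := by rw [integral_x2_exp_neg_Ioi hL]

lemma Krho_zero_s14 {lam : ℝ} (h : 0 < lam) : Krho 0 lam = Real.log lam := by
  rw [Krho]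
  have h1 : EqOn (fun u : ℝ => u ^ ((0:ℝ) - 1)) (fun u : ℝ => 1 / u) (uIcc 1 lam) := by
    intro u hu
    have hu0 : 0 < u := lt_of_lt_of_le (lt_min one_pos h) hu.1
    show u ^ ((0:ℝ) - 1) = 1 / u
    rw [show (0:ℝ) - 1 = -1 by norm_num, Real.rpow_neg_one, one_div]
  rw [intervalIntegral.integral_congr h1, integral_one_div, div_one]
  intro hc
  have := hc.1
  rcases le_or_gt 1 lam with hl | hl
  · have : (0:ℝ) ∉ uIcc 1 lam := by
      rw [uIcc_of_le hl]; intro hc2; linarith [hc2.1]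
    exact this hc
  · have : (0:ℝ) ∉ uIcc 1 lam := by
      rw [uIcc_of_ge hl.le]; intro hc2; linarith [hc2.1]
    exact this hc

lemma mu_identity {t : ℝ} (ht : 1 ≤ t) :
    t * muRho 0 t = 1 + ∫ x in Ioi (0:ℝ), psi t x * Real.exp (-x) := by
  have ht0 : (0:ℝ) < t := lt_of_lt_of_le one_pos ht
  have h1 : muRho 0 t = ∫ x in Ioi (0:ℝ), Real.log (1 + x/t) * Real.exp (-x) := by
    rw [muRho]
    apply setIntegral_congr_fun measurableSet_Ioi
    intro x hx
    simp only [Set.mem_Ioi] at hx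
    show Krho 0 (1 + x/t) * Real.exp (-x) = Real.log (1 + x/t) * Real.exp (-x)
    rw [Krho_zero_s14 (by positivity)]
  rw [h1, ← integral_const_mul]
  have h2 : EqOn (fun x => t * (Real.log (1 + x/t) * Real.exp (-x)))
      (fun x => x * Real.exp (-x) + psi t x * Real.exp (-x)) (Ioi (0:ℝ)) := by
    intro x _
    simp only [psi]
    ring
  rw [setIntegral_congr_fun measurableSet_Ioi h2,
    integral_add integrableOn_x_exp_neg (integrableOn_psi_exp_neg ht), integral_x_exp_neg]

lemma split_Ioi {f : ℝ → ℝ} {L : ℝ} (hL : 0 ≤ L) (hf : IntegrableOn f (Ioi 0)) :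
    ∫ x in Ioi (0:ℝ), f x = (∫ x in (0:ℝ)..L, f x) + ∫ x in Ioi L, f x := by
  rw [intervalIntegral.integral_of_le hL, ← Ioc_union_Ioi_eq_Ioi hL]
  rw [setIntegral_union (Ioc_disjoint_Ioi le_rfl) measurableSet_Ioi
    (hf.mono_set (by rw [← Ioc_union_Ioi_eq_Ioi hL]; exact subset_union_left))
    (hf.mono_set (by rw [← Ioc_union_Ioi_eq_Ioi hL]; exact subset_union_right))]


lemma integral_exp_neg_ftc' (p q : ℝ) :
    ∫ x in p..q, Real.exp (-x) = Real.exp (-p) - Real.exp (-q) := by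
  have := intervalIntegral.integral_eq_sub_of_hasDerivAt
    (f := fun x : ℝ => -Real.exp (-x)) (f' := fun x => Real.exp (-x))
    (fun x _ => by exact ((Real.hasDerivAt_exp (-x)).comp x (hasDerivAt_neg x)).neg.congr_deriv (by ring))
    ((Real.continuous_exp.comp continuous_neg).intervalIntegrable p q)
  rw [this]; ring

lemma block_bounds {g : ℝ → ℝ} {p q : ℝ} (hpq : p ≤ q)
    (hgc : ContinuousOn g (Icc p q)) (hm : ∀ x ∈ Icc p q, g p ≤ g x ∧ g x ≤ g q) :
    g p * (Real.exp (-p) - Real.exp (-q)) ≤ (∫ x in p..q, g x * Real.exp (-x)) ∧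
    (∫ x in p..q, g x * Real.exp (-x)) ≤ g q * (Real.exp (-p) - Real.exp (-q)) := by
  have hce : Continuous (fun x : ℝ => Real.exp (-x)) := Real.continuous_exp.comp continuous_neg
  have hint : IntervalIntegrable (fun x => g x * Real.exp (-x)) volume p q :=
    (hgc.mul hce.continuousOn).intervalIntegrable_of_Icc hpq
  have hint1 : IntervalIntegrable (fun x => g p * Real.exp (-x)) volume p q :=
    (continuous_const.mul hce).intervalIntegrable p q
  have hint2 : IntervalIntegrable (fun x => g q * Real.exp (-x)) volume p q :=
    (continuous_const.mul hce).intervalIntegrable p q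
  constructor
  · have h := intervalIntegral.integral_mono_on hpq hint1 hint
      (fun x hx => mul_le_mul_of_nonneg_right (hm x hx).1 (Real.exp_pos _).le)
    rwa [intervalIntegral.integral_const_mul, integral_exp_neg_ftc'] at h
  · have h := intervalIntegral.integral_mono_on hpq hint hint2
      (fun x hx => mul_le_mul_of_nonneg_right (hm x hx).2 (Real.exp_pos _).le)
    rwa [intervalIntegral.integral_const_mul, integral_exp_neg_ftc'] at h

lemma riemann_bounds (k : ℕ) (hk : 1 ≤ k) (g : ℝ → ℝ)
    (hgc : ContinuousOn g (Icc 0 (Real.log k)))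
    (hmono : MonotoneOn g (Icc 0 (Real.log k))) :
    (∑ i ∈ Finset.Icc 1 k, g (Real.log k - Real.log i)) / k - g (Real.log k) / k
      ≤ (∫ x in (0:ℝ)..(Real.log k), g x * Real.exp (-x))
    ∧ (∫ x in (0:ℝ)..(Real.log k), g x * Real.exp (-x))
      ≤ (∑ i ∈ Finset.Icc 1 k, g (Real.log k - Real.log i)) / k - g 0 / k := by
  have hk0 : (0:ℝ) < k := by exact_mod_cast hk
  set L := Real.log k with hL
  have hL0 : 0 ≤ L := Real.log_nonneg (by exact_mod_cast hk)
  set a : ℕ → ℝ := fun j => L - Real.log ((k - j : ℕ) : ℝ) with ha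
  have hsub : ∀ j, j ≤ k - 1 → (1:ℝ) ≤ ((k - j : ℕ) : ℝ) := by
    intro j hj
    have : 1 ≤ k - j := by omega
    exact_mod_cast this
  have hmem : ∀ j, j ≤ k - 1 → a j ∈ Icc 0 L := by
    intro j hj
    constructor
    · have h1 : Real.log ((k - j : ℕ) : ℝ) ≤ Real.log k := by
        apply Real.log_le_log (by linarith [hsub j hj])
        exact_mod_cast Nat.sub_le k j
      simpa [ha] using sub_nonneg.2 h1
    · have h2 : 0 ≤ Real.log ((k - j : ℕ) : ℝ) := Real.log_nonneg (hsub j hj)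
      simp only [ha]; linarith
  have hamono : ∀ j, j < k - 1 → a j ≤ a (j + 1) := by
    intro j hj
    have h1 : ((k - (j+1) : ℕ) : ℝ) ≤ ((k - j : ℕ) : ℝ) := by
      exact_mod_cast Nat.sub_le_sub_left (Nat.le_succ j) k
    have := Real.log_le_log (by linarith [hsub (j+1) (by omega)]) h1
    simp only [ha]; linarith
  have hexp : ∀ j, j ≤ k - 1 → Real.exp (-(a j)) = ((k - j : ℕ) : ℝ) / k := by
    intro j hj
    have h1 : (0:ℝ) < ((k - j : ℕ) : ℝ) := by linarith [hsub j hj]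
    rw [ha]
    simp only [neg_sub]
    rw [Real.exp_sub, Real.exp_log h1, hL, Real.exp_log hk0]
  have ha0 : a 0 = 0 := by simp [ha, hL]
  have haend : a (k - 1) = L := by
    have : k - (k-1) = 1 := by omega
    simp [ha, this]
  -- block bounds
  have hblocks : ∀ j, j < k - 1 →
      g (a j) * (1/k) ≤ (∫ x in (a j)..(a (j+1)), g x * Real.exp (-x)) ∧
      (∫ x in (a j)..(a (j+1)), g x * Real.exp (-x)) ≤ g (a (j+1)) * (1/k) := by
    intro j hj
    have hpq := hamono j hj
    have hj1 : j + 1 ≤ k - 1 := by omega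
    have hj0 : j ≤ k - 1 := by omega
    have hIcc : Icc (a j) (a (j+1)) ⊆ Icc 0 L :=
      Icc_subset_Icc (hmem j hj0).1 (hmem (j+1) hj1).2
    have hm : ∀ x ∈ Icc (a j) (a (j+1)), g (a j) ≤ g x ∧ g x ≤ g (a (j+1)) := by
      intro x hx
      exact ⟨hmono (hIcc ⟨le_refl _, hpq⟩) (hIcc hx) hx.1,
        hmono (hIcc hx) (hIcc ⟨hpq, le_refl _⟩) hx.2⟩
    have hb := block_bounds hpq (hgc.mono hIcc) hm
    have hfac : Real.exp (-(a j)) - Real.exp (-(a (j+1))) = 1/k := by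
      rw [hexp j hj0, hexp (j+1) hj1]
      have h1 : (k - j : ℕ) = (k - (j+1) : ℕ) + 1 := by omega
      rw [h1]
      push_cast
      field_simp
      ring
    rw [hfac] at hb
    exact hb
  have hintj : ∀ j, j < k - 1 →
      IntervalIntegrable (fun x => g x * Real.exp (-x)) volume (a j) (a (j+1)) := by
    intro j hj
    have hIcc : Icc (a j) (a (j+1)) ⊆ Icc 0 L :=
      Icc_subset_Icc (hmem j (by omega)).1 (hmem (j+1) (by omega)).2
    exact ((hgc.mono hIcc).mul
      (Real.continuous_exp.comp continuous_neg).continuousOn).intervalIntegrable_of_Icc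
      (hamono j hj)
  have hsum := intervalIntegral.sum_integral_adjacent_intervals (μ := volume)
    (f := fun x => g x * Real.exp (-x)) (a := a) (n := k - 1) hintj
  rw [ha0, haend] at hsum
  -- sum bounds
  have hlow : ∑ j ∈ Finset.range (k-1), g (a j) * (1/(k:ℝ))
      ≤ ∫ x in (0:ℝ)..L, g x * Real.exp (-x) := by
    rw [← hsum]
    exact Finset.sum_le_sum (fun j hj => (hblocks j (Finset.mem_range.mp hj)).1)
  have hhigh : (∫ x in (0:ℝ)..L, g x * Real.exp (-x))
      ≤ ∑ j ∈ Finset.range (k-1), g (a (j+1)) * (1/(k:ℝ)) := by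
    rw [← hsum]
    exact Finset.sum_le_sum (fun j hj => (hblocks j (Finset.mem_range.mp hj)).2)
  -- reindexing
  set h : ℕ → ℝ := fun i => g (L - Real.log (i : ℕ)) with hh
  have haj : ∀ j, a j = L - Real.log ((k - j : ℕ) : ℝ) := fun j => rfl
  have hS : ∑ i ∈ Finset.Icc 1 k, g (L - Real.log i) = ∑ j ∈ Finset.range k, h (j+1) := by
    rw [show Finset.Icc 1 k = Finset.Ico 1 (k+1) by rfl, Finset.sum_Ico_eq_sum_range]
    simp only [Nat.add_sub_cancel]
    apply Finset.sum_congr rfl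
    intro j _
    simp only [hh, add_comm 1 j]
  have hR1 : ∑ j ∈ Finset.range (k-1), g (a j)
      = (∑ j ∈ Finset.range k, h (j+1)) - h 1 := by
    have e1 : ∀ j ∈ Finset.range (k-1), g (a j) = (fun j => h (j + 1 + 1)) ((k-1) - 1 - j) := by
      intro j hj
      rw [Finset.mem_range] at hj
      have heq : (k - 1) - 1 - j + 1 + 1 = k - j := by omega
      simp only [haj, hh, heq]
    rw [Finset.sum_congr rfl e1, Finset.sum_range_reflect (fun j => h (j+1+1)) (k-1)]
    have hk' : k = (k-1) + 1 := by omega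
    have e2 : ∑ j ∈ Finset.range k, h (j+1) = (∑ j ∈ Finset.range (k-1), h (j+1+1)) + h 1 := by
      calc ∑ j ∈ Finset.range k, h (j+1) = ∑ j ∈ Finset.range ((k-1)+1), h (j+1) := by
            rw [← hk']
        _ = (∑ j ∈ Finset.range (k-1), h (j+1+1)) + h (0+1) :=
            Finset.sum_range_succ' (fun j => h (j+1)) (k-1)
        _ = (∑ j ∈ Finset.range (k-1), h (j+1+1)) + h 1 := by norm_num
    rw [e2]
    ring
  have hR2 : ∑ j ∈ Finset.range (k-1), g (a (j+1))
      = (∑ j ∈ Finset.range k, h (j+1)) - h k := by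
    have e1 : ∀ j ∈ Finset.range (k-1), g (a (j+1)) = (fun j => h (j + 1)) ((k-1) - 1 - j) := by
      intro j hj
      rw [Finset.mem_range] at hj
      have : (k - 1) - 1 - j + 1 = k - (j+1) := by omega
      simp only [haj, hh, this]
    rw [Finset.sum_congr rfl e1, Finset.sum_range_reflect (fun j => h (j+1)) (k-1)]
    have hk' : k = (k-1) + 1 := by omega
    have e2 : ∑ j ∈ Finset.range k, h (j+1)
        = (∑ j ∈ Finset.range (k-1), h (j+1)) + h k := by
      calc ∑ j ∈ Finset.range k, h (j+1) = ∑ j ∈ Finset.range ((k-1)+1), h (j+1) := by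
            rw [← hk']
        _ = (∑ j ∈ Finset.range (k-1), h (j+1)) + h ((k-1)+1) :=
            Finset.sum_range_succ (fun j => h (j+1)) (k-1)
        _ = (∑ j ∈ Finset.range (k-1), h (j+1)) + h k := by rw [← hk']
    rw [e2]
    ring
  have hsum_mul : ∀ (c : ℕ → ℝ), ∑ j ∈ Finset.range (k-1), c j * (1/(k:ℝ))
      = (∑ j ∈ Finset.range (k-1), c j) / k := by
    intro c
    simp only [mul_one_div]
    rw [← Finset.sum_div]
  rw [hsum_mul] at hlow hhigh
  rw [hR1] at hlow
  rw [hR2] at hhigh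
  have hh1 : h 1 = g L := by simp [hh]
  have hhk : h k = g 0 := by
    simp only [hh]
    rw [← hL, sub_self]
  rw [hh1] at hlow
  rw [hhk] at hhigh
  constructor
  · calc (∑ i ∈ Finset.Icc 1 k, g (L - Real.log i)) / k - g L / k
        = ((∑ j ∈ Finset.range k, h (j+1)) - g L) / k := by rw [hS]; ring
      _ ≤ _ := hlow
  · calc (∫ x in (0:ℝ)..L, g x * Real.exp (-x))
        ≤ ((∑ j ∈ Finset.range k, h (j+1)) - g 0) / k := hhigh
      _ = (∑ i ∈ Finset.Icc 1 k, g (L - Real.log i)) / k - g 0 / k := by rw [hS]; ring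


lemma sum_log_factorial (k : ℕ) :
    ∑ i ∈ Finset.Icc 1 k, Real.log (i:ℝ) = Real.log ((Nat.factorial k) : ℝ) := by
  induction k with
  | zero => simp
  | succ m ih =>
    rw [Finset.sum_Icc_succ_top (by omega), ih, Nat.factorial_succ]
    push_cast
    rw [Real.log_mul (by positivity) (by positivity)]
    ring

lemma log_stirling (k : ℕ) (hk : 1 ≤ k) :
    Real.log (Stirling.stirlingSeq k)
      = Real.log ((Nat.factorial k) : ℝ)
        - ((1/2) * Real.log (2*(k:ℝ)) + (k:ℝ) * (Real.log (k:ℝ) - 1)) := by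
  have hk0 : (0:ℝ) < (k:ℝ) := by exact_mod_cast hk
  have hf : (0:ℝ) < ((Nat.factorial k) : ℝ) := by exact_mod_cast Nat.factorial_pos k
  have h2k : (0:ℝ) < 2*(k:ℝ) := by linarith
  have hsq : (0:ℝ) < Real.sqrt (2*(k:ℝ)) := Real.sqrt_pos.mpr h2k
  have hke : (0:ℝ) < (k:ℝ) / Real.exp 1 := by positivity
  have hkep : (0:ℝ) < ((k:ℝ) / Real.exp 1) ^ k := by positivity
  rw [Stirling.stirlingSeq]
  rw [Real.log_div hf.ne' (by positivity), Real.log_mul hsq.ne' hkep.ne',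
    Real.log_sqrt h2k.le, Real.log_pow, Real.log_div hk0.ne' (Real.exp_ne_zero 1),
    Real.log_exp]
  ring

lemma S1_identity (k : ℕ) (hk : 1 ≤ k) :
    (∑ i ∈ Finset.Icc 1 k, (Real.log (k:ℝ) - Real.log (i:ℝ))) / (k:ℝ)
      = 1 - (Real.log (Stirling.stirlingSeq k) + (1/2) * Real.log (2*(k:ℝ))) / (k:ℝ) := by
  have hk0 : (0:ℝ) < (k:ℝ) := by exact_mod_cast hk
  have hsum : ∑ i ∈ Finset.Icc 1 k, (Real.log (k:ℝ) - Real.log (i:ℝ))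
      = (k:ℝ) * Real.log (k:ℝ) - Real.log ((Nat.factorial k) : ℝ) := by
    rw [Finset.sum_sub_distrib, Finset.sum_const, Nat.card_Icc, sum_log_factorial]
    simp
  rw [hsum, log_stirling k hk]
  field_simp
  ring


lemma b_mem {k i : ℕ} (hk : 1 ≤ k) (hi : i ∈ Finset.Icc 1 k) :
    Real.log (k:ℝ) - Real.log (i:ℝ) ∈ Icc 0 (Real.log (k:ℝ)) := by
  rw [Finset.mem_Icc] at hi
  have h1 : (1:ℝ) ≤ (i:ℝ) := by exact_mod_cast hi.1
  have h2 : (i:ℝ) ≤ (k:ℝ) := by exact_mod_cast hi.2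
  constructor
  · simp only [sub_nonneg]; exact Real.log_le_log (by linarith) h2
  · have := Real.log_nonneg h1; simp; linarith

lemma S2_bound (k : ℕ) (hk : 1 ≤ k) :
    (∑ i ∈ Finset.Icc 1 k, (Real.log (k:ℝ) - Real.log (i:ℝ))^2) / k
      ≤ 2 + (Real.log (k:ℝ))^2 / k := by
  have hk0 : (0:ℝ) < k := by exact_mod_cast hk
  have hL0 : 0 ≤ Real.log (k:ℝ) := Real.log_nonneg (by exact_mod_cast hk)
  have hmono : MonotoneOn (fun x : ℝ => x^2) (Icc 0 (Real.log (k:ℝ))) := by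
    intro x hx y hy hxy
    have := hx.1; have := hy.1
    simp only
    nlinarith
  have h := (riemann_bounds k hk (fun x => x^2) (by fun_prop) hmono).1
  have h2 : (∫ x in (0:ℝ)..(Real.log (k:ℝ)), x^2 * Real.exp (-x)) ≤ 2 := by
    rw [integral_x2_exp_neg_ftc]
    have e1 : Real.exp (-(0:ℝ)) = 1 := by simp
    have e2 : (0:ℝ) < Real.exp (-(Real.log (k:ℝ))) := Real.exp_pos _
    nlinarith [Real.exp_pos (-(Real.log (k:ℝ))), hL0,
      sq_nonneg (Real.log (k:ℝ))]
  nlinarith [h]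

/-- Main deterministic estimates. -/
lemma main_est (k : ℕ) (hk : 1 ≤ k) (t : ℝ) (ht : 1 ≤ t) :
    |(∑ i ∈ Finset.Icc 1 k, (t * Real.log (1 + (Real.log (k:ℝ) - Real.log (i:ℝ))/t))) / k
        - (∑ i ∈ Finset.Icc 1 k, (Real.log (k:ℝ) - Real.log (i:ℝ))) / k|
      ≤ (2 + (Real.log (k:ℝ))^2 / k) / t
    ∧ |t * muRho 0 t
        - (∑ i ∈ Finset.Icc 1 k, (t * Real.log (1 + (Real.log (k:ℝ) - Real.log (i:ℝ))/t))) / k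
        - (1 - (∑ i ∈ Finset.Icc 1 k, (Real.log (k:ℝ) - Real.log (i:ℝ))) / k)|
      ≤ (2*(Real.log (k:ℝ))^2 + 2*(Real.log (k:ℝ)) + 2) / (t * k) := by
  have ht0 : (0:ℝ) < t := lt_of_lt_of_le one_pos ht
  have hk0 : (0:ℝ) < k := by exact_mod_cast hk
  set L := Real.log (k:ℝ) with hLdef
  have hL0 : 0 ≤ L := Real.log_nonneg (by exact_mod_cast hk)
  set b : ℕ → ℝ := fun i => L - Real.log (i:ℝ) with hb
  have hbmem : ∀ i ∈ Finset.Icc 1 k, b i ∈ Icc 0 L := fun i hi => b_mem hk hi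
  have hdecomp : ∀ i ∈ Finset.Icc 1 k, t * Real.log (1 + b i / t) = b i + psi t (b i) := by
    intro i hi; simp [psi]
  have hsum_eq : (∑ i ∈ Finset.Icc 1 k, (t * Real.log (1 + b i/t))) / k
      = (∑ i ∈ Finset.Icc 1 k, b i) / k + (∑ i ∈ Finset.Icc 1 k, psi t (b i)) / k := by
    rw [Finset.sum_congr rfl hdecomp, Finset.sum_add_distrib, add_div]
  set Psi := (∑ i ∈ Finset.Icc 1 k, psi t (b i)) / k with hPsi
  have hPsi_abs : |Psi| ≤ (2 + L^2/k) / t := by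
    have h1 : |∑ i ∈ Finset.Icc 1 k, psi t (b i)| ≤ ∑ i ∈ Finset.Icc 1 k, (b i)^2 / t :=
      le_trans (Finset.abs_sum_le_sum_abs _ _)
        (Finset.sum_le_sum (fun i hi => psi_abs_le ht0 (hbmem i hi).1))
    have h2 : ∑ i ∈ Finset.Icc 1 k, (b i)^2 / t = (∑ i ∈ Finset.Icc 1 k, (b i)^2) / t := by
      rw [Finset.sum_div]
    have hS2 := S2_bound k hk
    rw [hPsi, abs_div, abs_of_pos hk0, div_le_div_iff₀ hk0 ht0]
    rw [h2] at h1
    have h3 : (∑ i ∈ Finset.Icc 1 k, (b i)^2) / t * (1:ℝ) ≤ (∑ i ∈ Finset.Icc 1 k, (b i)^2)/t := le_of_eq (mul_one _)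
    calc |∑ i ∈ Finset.Icc 1 k, psi t (b i)| * t ≤ ((∑ i ∈ Finset.Icc 1 k, (b i)^2)/t) * t := by
          exact mul_le_mul_of_nonneg_right h1 ht0.le
      _ = ∑ i ∈ Finset.Icc 1 k, (b i)^2 := by field_simp
      _ ≤ (2 + L^2/k) * k := by
          rw [← div_le_iff₀ hk0] at *
          exact hS2
  constructor
  · rw [hsum_eq]
    simpa using hPsi_abs
  · -- second estimate
    have hmu := mu_identity ht
    have hsplit := split_Ioi hL0 (integrableOn_psi_exp_neg ht)
    have htail := psi_tail_bound ht hL0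
    have hexpL : Real.exp (-L) = 1/(k:ℝ) := by
      rw [hLdef, Real.exp_neg, Real.exp_log hk0, one_div]
    -- riemann for -psi
    have hmono : MonotoneOn (fun x => -psi t x) (Icc 0 L) := by
      intro x hx y hy hxy
      have := psi_anti ht0 (Set.mem_Ici.mpr hx.1) (Set.mem_Ici.mpr hy.1) hxy
      simp only [neg_le_neg_iff]
      exact this
    have hgc : ContinuousOn (fun x => -psi t x) (Icc 0 L) :=
      ((psi_continuousOn ht0).mono (fun x hx => hx.1)).neg
    have hr := riemann_bounds k hk (fun x => -psi t x) hgc hmono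
    have hint_eq : (∫ x in (0:ℝ)..L, (-psi t x) * Real.exp (-x))
        = -∫ x in (0:ℝ)..L, psi t x * Real.exp (-x) := by
      rw [← intervalIntegral.integral_neg]
      congr 1; funext x; ring
    have hpsi0 : psi t 0 = 0 := by simp [psi]
    have hsum_neg : (∑ i ∈ Finset.Icc 1 k, (fun x => -psi t x) (L - Real.log (i:ℝ))) / (k:ℝ)
        = -Psi := by
      simp only [hPsi, hb]
      rw [Finset.sum_neg_distrib, neg_div]
    -- combine
    obtain ⟨hr1, hr2⟩ := hr
    rw [hint_eq] at hr1 hr2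
    rw [show Real.log ((k:ℕ):ℝ) = L from hLdef.symm] at hr1
    simp only [hpsi0, neg_zero, zero_div, sub_zero] at hr2
    rw [hsum_neg] at hr1 hr2
    -- hr1 : -Psi - (-psi t L)/k ≤ -∫₀ᴸ ;  hr2 : -∫₀ᴸ ≤ -Psi
    have hpsiL : |psi t L| ≤ L^2 / t := psi_abs_le ht0 hL0
    have hI : Psi ≤ (∫ x in (0:ℝ)..L, psi t x * Real.exp (-x)) ∧
        (∫ x in (0:ℝ)..L, psi t x * Real.exp (-x)) ≤ Psi + L^2/(t*k) := by
      constructor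
      · linarith
      · have h5 : -psi t L / (k:ℝ) ≤ L^2/(t*k) := by
          have h1 : -psi t L ≤ L^2/t := by linarith [(abs_le.mp hpsiL).1]
          have h2 : (-psi t L) * t ≤ L^2 := (le_div_iff₀ ht0).mp h1
          rw [div_le_div_iff₀ hk0 (by positivity : (0:ℝ) < t * k)]
          calc (-psi t L) * (t*(k:ℝ)) = ((-psi t L) * t) * k := by ring
            _ ≤ L^2 * k := mul_le_mul_of_nonneg_right h2 hk0.le
        linarith
    have htail' : |∫ x in Ioi L, psi t x * Real.exp (-x)| ≤ (L^2+2*L+2)/(t*k) := by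
      calc |∫ x in Ioi L, psi t x * Real.exp (-x)| ≤ (L^2 + 2*L + 2) * Real.exp (-L) / t := htail
        _ = (L^2+2*L+2)/(t*k) := by rw [hexpL]; ring
    -- final
    rw [hsum_eq]
    have heq : t * muRho 0 t - ((∑ i ∈ Finset.Icc 1 k, b i) / k + Psi) - (1 - (∑ i ∈ Finset.Icc 1 k, b i)/k)
        = ((∫ x in (0:ℝ)..L, psi t x * Real.exp (-x)) - Psi)
          + ∫ x in Ioi L, psi t x * Real.exp (-x) := by
      rw [hmu, hsplit]; ring
    rw [heq]
    have habs := abs_le.mp htail'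
    have hq : (0:ℝ) < t * k := by positivity
    have hq2 : (2*L^2+2*L+2)/(t*(k:ℝ)) = L^2/(t*k) + (L^2+2*L+2)/(t*k) := by
      rw [← add_div]; ring_nf
    have hpos : (0:ℝ) ≤ L^2/(t*(k:ℝ)) := by positivity
    rw [abs_le]
    constructor
    · linarith [hI.1, habs.1]
    · linarith [hI.2, habs.2]


set_option maxHeartbeats 2000000 in
theorem T_two_and_a_two_asymptotics
    (k : ℕ → ℕ) (hkbd : ∀ n, 2 ≤ n → 1 ≤ k n ∧ k n < n)
    (hk : Tendsto (fun n => (k n : ℝ)) atTop atTop)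
    (hkn : Tendsto (fun n => (k n : ℝ) / n) atTop (𝓝 0))
    (T2 : ℕ → ℝ)
    (hT2 : ∀ n, T2 n = (1 / (k n : ℝ)) * ∑ i ∈ Finset.Icc 1 (k n),
      Real.log (1 - Real.log ((i : ℝ) / (k n : ℝ)) / Real.log ((n : ℝ) / (k n : ℝ))))
    (a2 : ℕ → ℝ)
    (ha2 : ∀ n, a2 n = muRho 0 (Real.log ((n : ℝ) / (k n : ℝ))) / T2 n - 1) :
    Tendsto (fun n => T2 n * Real.log ((n : ℝ) / (k n : ℝ))) atTop (𝓝 1) ∧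
    (Tendsto (fun n : ℕ => Real.log (k n) / Real.log n) atTop (𝓝 0) →
      Tendsto (fun n => a2 n * (2 * (k n : ℝ)) / Real.log (k n)) atTop (𝓝 1)) := by
  set t : ℕ → ℝ := fun n => Real.log ((n:ℝ)/(k n : ℝ)) with htdef
  set L : ℕ → ℝ := fun n => Real.log ((k n : ℝ)) with hLdef
  set A : ℕ → ℝ := fun n =>
    (∑ i ∈ Finset.Icc 1 (k n), (t n * Real.log (1 + (L n - Real.log (i:ℝ))/(t n)))) / (k n : ℝ)
    with hAdef
  set S1 : ℕ → ℝ := fun n =>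
    (∑ i ∈ Finset.Icc 1 (k n), (L n - Real.log (i:ℝ))) / (k n : ℝ) with hS1def
  set eps : ℕ → ℝ := fun n => Real.log (Stirling.stirlingSeq (k n)) with hepsdef
  -- basic limit facts
  have hk_nat : Tendsto k atTop atTop := tendsto_natCast_atTop_iff.mp hk
  have ev_k1 : ∀ᶠ n in atTop, 1 ≤ k n := hk_nat.eventually_ge_atTop 1
  have hL_top : Tendsto L atTop atTop := Real.tendsto_log_atTop.comp hk
  have ev_L1 : ∀ᶠ n in atTop, 1 ≤ L n := hL_top.eventually_ge_atTop 1
  have ev_n2 : ∀ᶠ n in atTop, 2 ≤ n := eventually_ge_atTop 2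
  have hnk_top : Tendsto (fun n : ℕ => (n:ℝ)/(k n : ℝ)) atTop atTop := by
    have hpos : ∀ᶠ n in atTop, (k n:ℝ)/(n:ℝ) ∈ Set.Ioi (0:ℝ) := by
      filter_upwards [ev_n2, ev_k1] with n h2 h1
      have hn0 : (0:ℝ) < (n:ℝ) := by
        have : (2:ℝ) ≤ (n:ℝ) := by exact_mod_cast h2
        linarith
      have hk0 : (0:ℝ) < (k n:ℝ) := by exact_mod_cast h1
      exact div_pos hk0 hn0
    have h0 : Tendsto (fun n => (k n:ℝ)/(n:ℝ)) atTop (𝓝[>] 0) :=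
      tendsto_nhdsWithin_iff.mpr ⟨hkn, hpos⟩
    have h1 := h0.inv_tendsto_nhdsGT_zero
    apply h1.congr
    intro n
    simp [inv_div]
  have ht_top : Tendsto t atTop atTop := Real.tendsto_log_atTop.comp hnk_top
  have ev_t1 : ∀ᶠ n in atTop, 1 ≤ t n := ht_top.eventually_ge_atTop 1
  -- Stirling
  have heps : Tendsto eps atTop (𝓝 (Real.log (Real.sqrt Real.pi))) := by
    have hcont : ContinuousAt Real.log (Real.sqrt Real.pi) :=
      Real.continuousAt_log (by positivity)
    exact hcont.tendsto.comp (Stirling.tendsto_stirlingSeq_sqrt_pi.comp hk_nat)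
  -- S1 → 1
  have hlog2k : Tendsto (fun n => Real.log (2*(k n:ℝ)) / (2*(k n:ℝ))) atTop (𝓝 0) := by
    have h1 := Real.tendsto_pow_log_div_mul_add_atTop 1 0 1 one_ne_zero
    have h2 : Tendsto (fun n => 2*(k n:ℝ)) atTop atTop := hk.const_mul_atTop two_pos
    have := h1.comp h2
    apply this.congr
    intro n
    simp
  have hS1 : Tendsto S1 atTop (𝓝 1) := by
    have hl : Tendsto (fun n => 1 - (eps n/(k n:ℝ)
        + Real.log (2*(k n:ℝ)) / (2*(k n:ℝ)))) atTop (𝓝 (1 - (0 + 0))) :=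
      tendsto_const_nhds.sub ((heps.div_atTop hk).add hlog2k)
    norm_num at hl
    apply hl.congr'
    filter_upwards [ev_k1] with n h1
    have hk0 : (0:ℝ) < (k n:ℝ) := by exact_mod_cast h1
    rw [hS1def]
    simp only
    rw [S1_identity (k n) h1]
    have : (Real.log (Stirling.stirlingSeq (k n)) + 1/2 * Real.log (2*(k n:ℝ)))/(k n:ℝ)
        = eps n/(k n:ℝ) + Real.log (2*(k n:ℝ)) / (2*(k n:ℝ)) := by
      rw [hepsdef]
      field_simp
    rw [this]
  -- main estimates
  have hmain : ∀ᶠ n in atTop,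
      |A n - S1 n| ≤ (2 + (L n)^2/(k n:ℝ))/(t n) ∧
      |t n * muRho 0 (t n) - A n - (1 - S1 n)|
        ≤ (2*(L n)^2 + 2*(L n) + 2)/((t n)*(k n:ℝ)) := by
    filter_upwards [ev_k1, ev_t1] with n h1 ht1
    have := main_est (k n) h1 (t n) ht1
    simpa only [hAdef, hS1def, hLdef] using this
  -- A → 1
  have hL2k : Tendsto (fun n => (L n)^2/(k n:ℝ)) atTop (𝓝 0) := by
    have h1 := Real.tendsto_pow_log_div_mul_add_atTop 1 0 2 one_ne_zero
    have := h1.comp hk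
    apply this.congr
    intro n
    simp [hLdef]
  have hdiff : Tendsto (fun n => A n - S1 n) atTop (𝓝 0) := by
    have hbound : ∀ᶠ n in atTop, ‖A n - S1 n‖ ≤ (2 + (L n)^2/(k n:ℝ))/(t n) := by
      filter_upwards [hmain] with n hm
      simpa [Real.norm_eq_abs] using hm.1
    have hnum : Tendsto (fun n => 2 + (L n)^2/(k n:ℝ)) atTop (𝓝 (2 + 0)) :=
      tendsto_const_nhds.add hL2k
    exact squeeze_zero_norm' hbound (hnum.div_atTop ht_top)
  have hA1 : Tendsto A atTop (𝓝 1) := by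
    have := hdiff.add hS1
    norm_num at this
    apply this.congr
    intro n; ring
  -- T2 * t = A eventually
  have hT2t : ∀ᶠ n in atTop, T2 n * t n = A n := by
    filter_upwards [ev_n2] with n h2
    obtain ⟨hk1, hknlt⟩ := hkbd n h2
    have hkpos : (0:ℝ) < (k n : ℝ) := by exact_mod_cast hk1
    have hterm : ∀ i ∈ Finset.Icc 1 (k n),
        Real.log (1 - Real.log ((i:ℝ)/(k n:ℝ))/(t n))
          = Real.log (1 + (L n - Real.log (i:ℝ))/(t n)) := by
      intro i hi
      rw [Finset.mem_Icc] at hi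
      have hi0 : (0:ℝ) < (i:ℝ) := by exact_mod_cast hi.1
      rw [Real.log_div hi0.ne' hkpos.ne']
      congr 1
      rw [hLdef]
      ring
    rw [hT2 n, Finset.sum_congr rfl hterm, hAdef]
    simp only
    rw [← Finset.mul_sum]
    ring
  refine ⟨hA1.congr' (hT2t.mono fun n h => h.symm), ?_⟩
  -- part (ii)
  intro hlog
  have hlogn_top : Tendsto (fun n : ℕ => Real.log (n:ℝ)) atTop atTop :=
    Real.tendsto_log_atTop.comp tendsto_natCast_atTop_atTop
  have ev_logn : ∀ᶠ n : ℕ in atTop, 1 ≤ Real.log (n:ℝ) := hlogn_top.eventually_ge_atTop 1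
  have ht_eq : ∀ᶠ n in atTop, t n = Real.log (n:ℝ) - L n := by
    filter_upwards [ev_n2] with n h2
    obtain ⟨hk1, hknlt⟩ := hkbd n h2
    have hn0 : (0:ℝ) < (n:ℝ) := by
      have : (2:ℝ) ≤ (n:ℝ) := by exact_mod_cast h2
      linarith
    have hk0 : (0:ℝ) < (k n:ℝ) := by exact_mod_cast hk1
    rw [htdef, hLdef]
    simp only
    exact Real.log_div hn0.ne' hk0.ne'
  have hg1 : Tendsto (fun n => t n / Real.log (n:ℝ)) atTop (𝓝 1) := by
    have hl : Tendsto (fun n : ℕ => 1 - Real.log (k n:ℝ)/Real.log (n:ℝ)) atTop (𝓝 (1 - 0)) :=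
      tendsto_const_nhds.sub hlog
    norm_num at hl
    apply hl.congr'
    filter_upwards [ht_eq, ev_logn] with n heq hln
    have hln0 : Real.log (n:ℝ) ≠ 0 := by linarith
    rw [heq, sub_div, div_self hln0, hLdef]
  have hLt : Tendsto (fun n => L n / t n) atTop (𝓝 0) := by
    have hdiv := hlog.div hg1 one_ne_zero
    norm_num at hdiv
    apply hdiv.congr'
    filter_upwards [ev_logn, ev_t1] with n hln ht1
    have hln0 : Real.log (n:ℝ) ≠ 0 := by linarith
    have ht0 : t n ≠ 0 := by linarith
    rw [hLdef]
    simp only [Pi.div_apply]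
    field_simp
  -- numerator part 1
  have hNum1 : Tendsto (fun n => (1 - S1 n) * (2*(k n:ℝ)) / L n) atTop (𝓝 1) := by
    have hc : Tendsto (fun n => 2*eps n + Real.log 2) atTop
        (𝓝 (2*Real.log (Real.sqrt Real.pi) + Real.log 2)) :=
      (heps.const_mul 2).add_const (Real.log 2)
    have hl : Tendsto (fun n => 1 + (2*eps n + Real.log 2)/L n) atTop (𝓝 (1 + 0)) :=
      tendsto_const_nhds.add (hc.div_atTop hL_top)
    norm_num at hl
    apply hl.congr'
    filter_upwards [ev_k1, ev_L1] with n h1 hL1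
    have hk0 : (0:ℝ) < (k n:ℝ) := by exact_mod_cast h1
    have hL0 : L n ≠ 0 := by linarith
    have hlog2k_id : Real.log (2*(k n:ℝ)) = Real.log 2 + L n := by
      rw [hLdef]; exact Real.log_mul two_ne_zero hk0.ne'
    have hS1n : S1 n = 1 - (eps n + (1/2) * Real.log (2*(k n:ℝ))) / (k n:ℝ) := by
      rw [hS1def, hepsdef]
      simp only
      rw [hLdef]
      exact S1_identity (k n) h1
    rw [hS1n, hlog2k_id]
    field_simp
    ring
  -- numerator part 2 (remainder)
  have hNum2 : Tendsto (fun n =>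
      (t n * muRho 0 (t n) - A n - (1 - S1 n)) * (2*(k n:ℝ)) / L n) atTop (𝓝 0) := by
    have hbound : ∀ᶠ n in atTop,
        ‖(t n * muRho 0 (t n) - A n - (1 - S1 n)) * (2*(k n:ℝ)) / L n‖
          ≤ (4*L n + 8)/t n := by
      filter_upwards [hmain, ev_k1, ev_L1, ev_t1] with n hm h1 hL1 ht1
      have hk0 : (0:ℝ) < (k n:ℝ) := by exact_mod_cast h1
      have hL0 : (0:ℝ) < L n := by linarith
      have ht0 : (0:ℝ) < t n := by linarith
      have hR := hm.2
      rw [Real.norm_eq_abs, abs_div, abs_mul, abs_of_pos hL0,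
        abs_of_pos (by positivity : (0:ℝ) < 2*(k n:ℝ))]
      have e1 : (2*(L n)^2 + 2*(L n) + 2)/((t n)*(k n:ℝ)) * (2*(k n:ℝ)) / L n
          = (4*(L n)^2 + 4*(L n) + 4)/((t n) * L n) := by
        field_simp
        ring
      have e2 : (4*(L n)^2 + 4*(L n) + 4)/((t n) * L n) ≤ (4*L n + 8)/t n := by
        rw [div_le_div_iff₀ (by positivity) ht0]
        nlinarith [sq_nonneg (L n)]
      calc |t n * muRho 0 (t n) - A n - (1 - S1 n)| * (2*(k n:ℝ)) / L n
          ≤ (2*(L n)^2 + 2*(L n) + 2)/((t n)*(k n:ℝ)) * (2*(k n:ℝ)) / L n := by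
            gcongr
        _ = (4*(L n)^2 + 4*(L n) + 4)/((t n) * L n) := e1
        _ ≤ (4*L n + 8)/t n := e2
    have hg : Tendsto (fun n => (4*L n + 8)/t n) atTop (𝓝 0) := by
      have h4 : Tendsto (fun n => 4*(L n/t n)) atTop (𝓝 (4*0)) := hLt.const_mul 4
      have h8 : Tendsto (fun n => 8/t n) atTop (𝓝 0) :=
        tendsto_const_nhds.div_atTop ht_top
      have := h4.add h8
      norm_num at this
      apply this.congr
      intro n
      ring
    exact squeeze_zero_norm' hbound hg
  -- combine numerator
  have hN : Tendsto (fun n => (t n * muRho 0 (t n) - A n) * (2*(k n:ℝ)) / L n) atTop (𝓝 1) := by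
    have := hNum1.add hNum2
    norm_num at this
    apply this.congr
    intro n
    ring
  -- final
  have ev_A : ∀ᶠ n in atTop, (1:ℝ)/2 < A n := hA1.eventually (eventually_gt_nhds (by norm_num))
  have hfin := hN.div hA1 one_ne_zero
  norm_num at hfin
  apply hfin.congr'
  filter_upwards [hT2t, ev_A, ev_t1] with n hTt hA2 ht1
  simp only [Pi.div_apply]
  show (t n * muRho 0 (t n) - A n) * (2*(k n:ℝ)) / L n / A n
      = a2 n * (2*(k n:ℝ)) / L n
  have hA0 : A n ≠ 0 := by linarith
  have ht0 : t n ≠ 0 := by linarith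
  have hμT : muRho 0 (t n) / T2 n = (t n * muRho 0 (t n))/(A n) := by
    rw [← hTt, mul_comm (T2 n) (t n), mul_div_mul_left _ _ ht0]
  rw [ha2 n, hμT]
  field_simp
end
end
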